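/- arXiv:1209.6068 — 8 statements merged into one kernel-verified Lean document; each statement's English description precedes it below -/
import Mathlib

section
/- Let H be a complex Hilbert space, M a unital *-subalgebra of the bounded operators on H, and Ω ∈ H a unit vector that is cyclic for M (i.e. {AΩ : A ∈ M} is dense in H). Let (U_t)_{t∈ℝ} be a strongly continuous one-parameter group of unitary operators on H (U_0 = 1, U_{s+t} = U_s U_t) such that U_t Ω = Ω and U_t M U_{-t} = M for all t ∈ ℝ, and suppose the generator is positive in the following sense: for all ψ, φ ∈ H there is a function G : ℂ → ℂ, bounded and continuous on the closed upper half-plane {z : Im z ≥ 0} and holomorphic on the open upper half-plane, with G(t) = ⟨ψ, U_t φ⟩ for all t ∈ ℝ. If the group is non-degenerate, i.e. every ψ ∈ H with U_t ψ = ψ for all t ∈ ℝ is a scalar multiple of Ω, then the commutant of M is trivial: every bounded operator X on H satisfying XA = AX for all A ∈ M is a scalar multiple of the identity. -/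
open Complex Set Filter Asymptotics

/-- Phragmén–Lindelöf for the upper half-plane, bounded version. -/
lemma borchers_pl_upper {f : ℂ → ℂ} {B C : ℝ}
    (hd : DifferentiableOn ℂ f {z : ℂ | 0 < z.im})
    (hc : ContinuousOn f {z : ℂ | 0 ≤ z.im})
    (hB : ∀ z : ℂ, 0 ≤ z.im → ‖f z‖ ≤ B)
    (hC : ∀ t : ℝ, ‖f (t : ℂ)‖ ≤ C) :
    ∀ z : ℂ, 0 ≤ z.im → ‖f z‖ ≤ C := by
  intro w hw
  have hmaps : MapsTo (fun z : ℂ => z * I) {z : ℂ | 0 < z.re} {z : ℂ | 0 < z.im} := by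
    intro z hz; simpa [mul_I_im] using hz
  have hmaps' : MapsTo (fun z : ℂ => z * I) {z : ℂ | 0 ≤ z.re} {z : ℂ | 0 ≤ z.im} := by
    intro z hz; simpa [mul_I_im] using hz
  have key : ∀ z : ℂ, 0 ≤ z.re → ‖f (z * I)‖ ≤ C := by
    intro z hz
    refine PhragmenLindelof.right_half_plane_of_bounded_on_real
      (f := fun z : ℂ => f (z * I)) ?_ ?_ ?_ ?_ hz
    · constructor
      · exact hd.comp ((differentiable_id.mul_const I).differentiableOn) hmaps
      · rw [closure_setOf_lt_re]
        exact hc.comp ((continuous_id.mul continuous_const).continuousOn) hmaps'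
    · refine ⟨1, one_lt_two, 0, ?_⟩
      refine IsBigO.of_bound B ?_
      filter_upwards [eventually_inf_principal.2
        (Eventually.of_forall (fun z (hz : 0 < z.re) => hz.le))] with z hz
      have : ‖f (z * I)‖ ≤ B := hB _ (by simpa [mul_I_im] using hz)
      simpa [Real.exp_zero] using this
    · refine isBoundedUnder_of_eventually_le (a := B) ?_
      filter_upwards [eventually_ge_atTop (0 : ℝ)] with x hx
      exact hB _ (by simpa [mul_I_im] using hx)
    · intro x
      have : ((x : ℂ) * I) * I = ((-x : ℝ) : ℂ) := by
        push_cast; rw [mul_assoc, I_mul_I]; ring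
      show ‖f ((x:ℂ) * I * I)‖ ≤ C
      rw [this]; exact hC (-x)
  have h1 : (0:ℝ) ≤ (w * (-I)).re := by simpa using hw
  have h2 : (w * (-I)) * I = w := by
    rw [mul_assoc]; simp
  have := key (w * (-I)) h1
  rwa [h2] at this

/-- A bounded holomorphic function on the upper half-plane, continuous up to the boundary,
with real boundary values, is constant on the real line. -/
lemma borchers_real_boundary_const {f : ℂ → ℂ} {B : ℝ}
    (hd : DifferentiableOn ℂ f {z : ℂ | 0 < z.im})
    (hc : ContinuousOn f {z : ℂ | 0 ≤ z.im})
    (hB : ∀ z : ℂ, 0 ≤ z.im → ‖f z‖ ≤ B)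
    (hreal : ∀ t : ℝ, (f (t : ℂ)).im = 0) :
    ∀ t : ℝ, f (t : ℂ) = f 0 := by
  -- Step 1 : the imaginary part of `f` vanishes on the closed upper half-plane.
  have him : ∀ z : ℂ, 0 ≤ z.im → (f z).im = 0 := by
    have gen : ∀ s : ℂ, (∀ u : ℂ, (s * u).re = -u.im ∨ ∀ u : ℂ, (s * u).re = u.im) →
        True := fun _ _ => trivial
    -- exp (I * f z) trick, both signs
    have main : ∀ ε : ℝ, ε = 1 ∨ ε = -1 →
        ∀ z : ℂ, 0 ≤ z.im → Real.exp (-(ε * (f z).im)) ≤ 1 := by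
      intro ε hε z hz
      have hnorm : ∀ u : ℂ, ‖Complex.exp ((ε : ℂ) * I * u)‖ = Real.exp (-(ε * u.im)) := by
        intro u
        rw [Complex.norm_exp]
        congr 1
        have : ((ε : ℂ) * I * u).re = -(ε * u.im) := by
          simp [Complex.mul_re, Complex.mul_im]
        rw [this]
      have hble : ∀ w : ℂ, 0 ≤ w.im → ‖Complex.exp ((ε : ℂ) * I * f w)‖ ≤ Real.exp |B| := by
        intro w hw
        rw [hnorm]
        apply Real.exp_le_exp.2
        have h1 : |(f w).im| ≤ ‖f w‖ := Complex.abs_im_le_norm _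
        have h2 : ‖f w‖ ≤ B := hB w hw
        have hε1 : |ε| = 1 := by rcases hε with h | h <;> simp [h]
        calc -(ε * (f w).im) ≤ |(-(ε * (f w).im))| := le_abs_self _
          _ = |ε| * |(f w).im| := by rw [abs_neg, abs_mul]
          _ ≤ 1 * |B| := by
              rw [hε1]
              have : |(f w).im| ≤ |B| := le_trans h1 (le_trans h2 (le_abs_self B))
              linarith
          _ = |B| := one_mul _
      have hdiff : DifferentiableOn ℂ (fun z => Complex.exp ((ε : ℂ) * I * f z))
          {z : ℂ | 0 < z.im} := ((hd.const_mul ((ε : ℂ) * I))).cexp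
      have hcont : ContinuousOn (fun z => Complex.exp ((ε : ℂ) * I * f z))
          {z : ℂ | 0 ≤ z.im} := ((hc.const_smul ((ε : ℂ) * I)).cexp)
      have hbnd : ∀ t : ℝ, ‖Complex.exp ((ε : ℂ) * I * f (t : ℂ))‖ ≤ 1 := by
        intro t
        rw [hnorm, hreal t]
        simp
      have := borchers_pl_upper hdiff hcont hble hbnd z hz
      rwa [hnorm] at this
    intro z hz
    have h1 := main 1 (Or.inl rfl) z hz
    have h2 := main (-1) (Or.inr rfl) z hz
    rw [Real.exp_le_one_iff] at h1 h2
    simp only [neg_mul, one_mul, neg_neg, neg_nonpos] at h1 h2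
    linarith
  -- Step 2 : `f` is constant on the open upper half-plane
  have hopen : IsOpen {z : ℂ | 0 < z.im} := isOpen_lt continuous_const Complex.continuous_im
  have hpre : IsPreconnected {z : ℂ | 0 < z.im} :=
    (convex_halfSpace_im_gt 0).isPreconnected
  have han : AnalyticOnNhd ℂ f {z : ℂ | 0 < z.im} := hd.analyticOnNhd hopen
  rcases han.is_constant_or_isOpen hpre with ⟨c, hcst⟩ | hmap
  · -- use continuity to extend the constancy to the real line
    have hlim : ∀ t : ℝ, f (t : ℂ) = c := by
      intro t
      have hmem : (t : ℂ) ∈ {z : ℂ | 0 ≤ z.im} := by simp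
      have hcw : ContinuousWithinAt f {z : ℂ | 0 ≤ z.im} (t : ℂ) := hc _ hmem
      have htend : Tendsto (fun ε : ℝ => (t : ℂ) + ε * I) (nhdsWithin 0 (Ioi 0))
          (nhdsWithin (t : ℂ) {z : ℂ | 0 ≤ z.im}) := by
        apply tendsto_nhdsWithin_of_tendsto_nhds_of_eventually_within
        · have : Tendsto (fun ε : ℝ => (t : ℂ) + ε * I) (nhds 0) (nhds ((t : ℂ) + 0 * I)) := by
            exact (tendsto_const_nhds.add ((Complex.continuous_ofReal.tendsto 0).mul
              tendsto_const_nhds))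
          simpa using this.mono_left nhdsWithin_le_nhds
        · filter_upwards [self_mem_nhdsWithin] with ε (hε : 0 < ε)
          simp [hε.le]
      have h1 : Tendsto (fun ε : ℝ => f ((t : ℂ) + ε * I)) (nhdsWithin 0 (Ioi 0))
          (nhds (f (t : ℂ))) := hcw.tendsto.comp htend
      have h2 : Tendsto (fun ε : ℝ => f ((t : ℂ) + ε * I)) (nhdsWithin 0 (Ioi 0))
          (nhds c) := by
        apply Tendsto.congr' _ tendsto_const_nhds
        filter_upwards [self_mem_nhdsWithin] with ε (hε : 0 < ε)
        exact (hcst _ (by simp [hε])).symm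
      exact tendsto_nhds_unique h1 h2
    intro t
    have h0 : f (0 : ℂ) = c := by simpa using hlim 0
    rw [hlim t, h0]
  · -- impossible: the image is contained in the reals
    exfalso
    have hI : (I : ℂ) ∈ {z : ℂ | 0 < z.im} := by simp
    have himg : IsOpen (f '' {z : ℂ | 0 < z.im}) :=
      hmap _ (subset_refl _) hopen
    obtain ⟨ε, hε, hball⟩ := Metric.isOpen_iff.1 himg (f I) ⟨I, hI, rfl⟩
    have hmem : f I + (ε / 2) * I ∈ Metric.ball (f I) ε := by
      rw [Metric.mem_ball, dist_eq_norm]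
      have : ‖f I + (ε / 2) * I - f I‖ = ε / 2 := by
        simp [abs_of_pos hε]
      rw [this]; linarith
    obtain ⟨w, hw, hweq⟩ := hball hmem
    have := him w (le_of_lt hw)
    rw [hweq] at this
    have hfI : (f I).im = 0 := him I (by simp)
    simp only [Complex.add_im, Complex.mul_im, Complex.ofReal_re, Complex.I_im,
      Complex.ofReal_im, Complex.I_re, hfI] at this
    simp at this
    linarith

/-- If `G` is differentiable at `w`, then `z ↦ conj (G (-conj z))` is differentiable
at `-conj w`. -/
lemma borchers_hasDerivAt_reflect {G : ℂ → ℂ} {d w : ℂ} (h : HasDerivAt G d w) :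
    HasDerivAt (fun z : ℂ => (starRingEnd ℂ) (G (-(starRingEnd ℂ) z)))
      (-(starRingEnd ℂ) d) (-(starRingEnd ℂ) w) := by
  set σ : ℂ → ℂ := fun z => -(starRingEnd ℂ) z with hσ
  set z₀ : ℂ := -(starRingEnd ℂ) w with hz₀
  have hσz₀ : σ z₀ = w := by simp [σ, z₀]
  have h' := hasDerivAt_iff_isLittleO.mp h
  have hσcont : Continuous σ := (continuous_conj).neg
  have htend : Tendsto σ (nhds z₀) (nhds w) := by
    have := hσcont.tendsto z₀
    rwa [hσz₀] at this
  have comp := h'.comp_tendsto htend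
  rw [hasDerivAt_iff_isLittleO]
  have eq1 : ∀ x' : ℂ,
      (starRingEnd ℂ) (G (σ x')) - (starRingEnd ℂ) (G (σ z₀)) -
        (x' - z₀) • (-(starRingEnd ℂ) d)
      = (starRingEnd ℂ) (G (σ x') - G w - (σ x' - w) • d) := by
    intro x'
    have hs : σ x' - w = -((starRingEnd ℂ) (x' - z₀)) := by
      simp [σ, z₀, map_sub]
      ring
    rw [hσz₀, hs]
    simp only [smul_eq_mul, map_sub, map_neg, map_mul, Complex.conj_conj]
    ring
  have eq2 : ∀ x' : ℂ, ‖σ x' - w‖ = ‖x' - z₀‖ := by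
    intro x'
    have hs : σ x' - w = -((starRingEnd ℂ) (x' - z₀)) := by
      simp [σ, z₀, map_sub]
      ring
    rw [hs, norm_neg, RCLike.norm_conj]
  have hn := comp.norm_norm
  have final : (fun x' : ℂ => ‖(starRingEnd ℂ) (G (σ x')) - (starRingEnd ℂ) (G (σ z₀)) -
      (x' - z₀) • (-(starRingEnd ℂ) d)‖) =o[nhds z₀] fun x' : ℂ => ‖x' - z₀‖ := by
    refine hn.congr (fun x' => ?_) (fun x' => eq2 x')
    simp only [Function.comp_apply]
    rw [eq1 x', RCLike.norm_conj]
  exact isLittleO_norm_norm.mp final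

/-- Key analytic lemma: if `g : ℝ → ℂ` extends to a bounded holomorphic function on the
(closed) upper half-plane and so does `t ↦ g (-t)`, then `g` is constant. -/
lemma borchers_two_sided_const {g : ℝ → ℂ} {G₁ G₂ : ℂ → ℂ} {C₁ C₂ : ℝ}
    (hb₁ : ∀ z : ℂ, 0 ≤ z.im → ‖G₁ z‖ ≤ C₁)
    (hc₁ : ContinuousOn G₁ {z : ℂ | 0 ≤ z.im})
    (hd₁ : DifferentiableOn ℂ G₁ {z : ℂ | 0 < z.im})
    (hbd₁ : ∀ t : ℝ, G₁ (t : ℂ) = g t)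
    (hb₂ : ∀ z : ℂ, 0 ≤ z.im → ‖G₂ z‖ ≤ C₂)
    (hc₂ : ContinuousOn G₂ {z : ℂ | 0 ≤ z.im})
    (hd₂ : DifferentiableOn ℂ G₂ {z : ℂ | 0 < z.im})
    (hbd₂ : ∀ t : ℝ, G₂ (t : ℂ) = g (-t)) :
    ∀ t : ℝ, g t = g 0 := by
  set σ : ℂ → ℂ := fun z => -(starRingEnd ℂ) z with hσ
  have hσim : ∀ z : ℂ, (σ z).im = z.im := by intro z; simp [σ]
  have hσcont : Continuous σ := (continuous_conj).neg
  set F : ℂ → ℂ := fun z => (starRingEnd ℂ) (G₂ (σ z)) with hF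
  have hopen : IsOpen {z : ℂ | 0 < z.im} := isOpen_lt continuous_const Complex.continuous_im
  -- properties of F
  have hFd : DifferentiableOn ℂ F {z : ℂ | 0 < z.im} := by
    intro z hz
    have hσz : σ z ∈ {z : ℂ | 0 < z.im} := by
      simp only [mem_setOf_eq, hσim]; exact hz
    have hG : DifferentiableAt ℂ G₂ (σ z) :=
      (hd₂ _ hσz).differentiableAt (hopen.mem_nhds hσz)
    have hder := borchers_hasDerivAt_reflect hG.hasDerivAt
    have hzz : -(starRingEnd ℂ) (σ z) = z := by simp [σ]
    rw [hzz] at hder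
    exact hder.differentiableAt.differentiableWithinAt
  have hFc : ContinuousOn F {z : ℂ | 0 ≤ z.im} := by
    apply Complex.continuous_conj.comp_continuousOn
    apply hc₂.comp hσcont.continuousOn
    intro z hz
    simp only [mem_setOf_eq, hσim]; exact hz
  have hFb : ∀ z : ℂ, 0 ≤ z.im → ‖F z‖ ≤ C₂ := by
    intro z hz
    rw [hF]
    simp only [RCLike.norm_conj]
    exact hb₂ _ (by simp only [mem_setOf_eq, hσim]; exact hz)
  have hFbd : ∀ t : ℝ, F (t : ℂ) = (starRingEnd ℂ) (g t) := by
    intro t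
    have : σ (t : ℂ) = ((-t : ℝ) : ℂ) := by simp [σ]
    rw [hF]
    simp only [this, hbd₂, neg_neg]
  -- P := G₁ + F has real boundary values
  have hP := borchers_real_boundary_const
    (f := fun z => G₁ z + F z) (B := C₁ + C₂)
    (hd₁.add hFd) (hc₁.add hFc)
    (fun z hz => (norm_add_le _ _).trans (add_le_add (hb₁ z hz) (hFb z hz)))
    (fun t => by
      show (G₁ (t : ℂ) + F (t : ℂ)).im = 0
      rw [hbd₁, hFbd]; simp)
  -- Q := -I * (G₁ - F) has real boundary values
  have hQ := borchers_real_boundary_const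
    (f := fun z => -I * (G₁ z - F z)) (B := C₁ + C₂)
    (((hd₁.sub hFd)).const_mul (-I))
    ((hc₁.sub hFc).const_smul (-I))
    (fun z hz => by
      rw [norm_mul]
      have : ‖(-I : ℂ)‖ = 1 := by simp
      rw [this, one_mul]
      exact (norm_sub_le _ _).trans (add_le_add (hb₁ z hz) (hFb z hz)))
    (fun t => by
      show (-I * (G₁ (t : ℂ) - F (t : ℂ))).im = 0
      rw [hbd₁, hFbd]
      simp [Complex.mul_im, Complex.sub_re, Complex.sub_im])
  intro t
  have hPt : G₁ (t : ℂ) + F (t : ℂ) = G₁ (0 : ℂ) + F (0 : ℂ) := hP t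
  have hQt : -I * (G₁ (t : ℂ) - F (t : ℂ)) = -I * (G₁ (0 : ℂ) - F (0 : ℂ)) := hQ t
  rw [hbd₁, hFbd] at hPt hQt
  have h00 : G₁ (0 : ℂ) + F (0 : ℂ) = g 0 + (starRingEnd ℂ) (g 0) := by
    have e1 : G₁ (0 : ℂ) = g 0 := by simpa using hbd₁ 0
    have e2 : F (0 : ℂ) = (starRingEnd ℂ) (g 0) := by simpa using hFbd 0
    rw [e1, e2]
  have h01 : -I * (G₁ (0 : ℂ) - F (0 : ℂ)) = -I * (g 0 - (starRingEnd ℂ) (g 0)) := by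
    have e1 : G₁ (0 : ℂ) = g 0 := by simpa using hbd₁ 0
    have e2 : F (0 : ℂ) = (starRingEnd ℂ) (g 0) := by simpa using hFbd 0
    rw [e1, e2]
  rw [h00] at hPt
  rw [h01] at hQt
  -- extract real and imaginary parts
  have hre : (g t).re = (g 0).re := by
    have := congrArg Complex.re hPt
    simp only [Complex.add_re, Complex.conj_re] at this
    linarith
  have him : (g t).im = (g 0).im := by
    have := congrArg Complex.re hQt
    simp only [Complex.mul_re, Complex.neg_re, Complex.I_re, Complex.neg_im, Complex.I_im,
      Complex.sub_re, Complex.sub_im, Complex.conj_re, Complex.conj_im] at this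
    linarith
  exact Complex.ext hre him

open ContinuousLinearMap


/-- Borchers' theorem in representation form: a non-degenerate invariant strongly continuous
unitary group with positive generator (encoded by holomorphic extension of matrix elements to
the upper half-plane) and invariant cyclic unit vector forces the commutant of the invariant
unital *-algebra `M` to be trivial. -/
theorem nondegenerate_ground_commutant_trivial
    {H : Type*} [NormedAddCommGroup H] [InnerProductSpace ℂ H] [CompleteSpace H]
    (M : StarSubalgebra ℂ (H →L[ℂ] H))
    (Ω : H) (hΩnorm : ‖Ω‖ = 1)
    (hcyc : Dense {ψ : H | ∃ A ∈ M, ψ = A Ω})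
    (U : ℝ → (H →L[ℂ] H))
    (hUunitary : ∀ t : ℝ, U t ∈ unitary (H →L[ℂ] H))
    (hU0 : U 0 = 1)
    (hUadd : ∀ s t : ℝ, U (s + t) = U s * U t)
    (hUcont : ∀ ψ : H, Continuous fun t : ℝ => U t ψ)
    (hUΩ : ∀ t : ℝ, U t Ω = Ω)
    (hUM : ∀ t : ℝ, (fun A => U t * A * U (-t)) '' (M : Set (H →L[ℂ] H)) = M)
    (hpos : ∀ ψ φ : H, ∃ G : ℂ → ℂ,
      (∃ C : ℝ, ∀ z : ℂ, 0 ≤ z.im → ‖G z‖ ≤ C) ∧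
      ContinuousOn G {z : ℂ | 0 ≤ z.im} ∧
      DifferentiableOn ℂ G {z : ℂ | 0 < z.im} ∧
      ∀ t : ℝ, G (t : ℂ) = (inner ℂ ψ (U t φ) : ℂ))
    (hnondeg : ∀ ψ : H, (∀ t : ℝ, U t ψ = ψ) → ∃ c : ℂ, ψ = c • Ω) :
    ∀ X : H →L[ℂ] H, (∀ A ∈ M, X * A = A * X) → ∃ c : ℂ, X = c • (1 : H →L[ℂ] H) := by
  have hstar : ∀ t : ℝ, star (U t) = U (-t) := by
    intro t
    have h1 : U t * U (-t) = 1 := by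
      rw [← hUadd]; simpa using hU0
    have h2 : star (U t) * U t = 1 := (Unitary.mem_iff.mp (hUunitary t)).1
    calc star (U t) = star (U t) * (U t * U (-t)) := by rw [h1, mul_one]
      _ = (star (U t) * U t) * U (-t) := by rw [mul_assoc]
      _ = U (-t) := by rw [h2, one_mul]
  -- the key identity : ⟪(star Y) Ω, U t (A Ω)⟫ = ⟪(star A) Ω, U (-t) (Y Ω)⟫
  have gid : ∀ (Y : H →L[ℂ] H), (∀ A ∈ M, Y * A = A * Y) →
      ∀ (A : H →L[ℂ] H), A ∈ M → ∀ t : ℝ,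
      (inner ℂ ((star Y) Ω) (U t (A Ω)) : ℂ) = inner ℂ ((star A) Ω) (U (-t) (Y Ω)) := by
    intro Y hY A hA t
    have hB : U t * A * U (-t) ∈ M := by
      have : U t * A * U (-t) ∈ (M : Set (H →L[ℂ] H)) := by
        rw [← hUM t]; exact ⟨A, hA, rfl⟩
      exact this
    have e1 : U t (A Ω) = (U t * A * U (-t)) Ω := by
      simp only [ContinuousLinearMap.mul_apply, hUΩ]
    have e56 : (star (U t * A * U (-t))) Ω = U t ((star A) Ω) := by
      rw [star_mul, star_mul, hstar, hstar, neg_neg, ← mul_assoc]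
      simp only [ContinuousLinearMap.mul_apply, hUΩ]
    calc (inner ℂ ((star Y) Ω) (U t (A Ω)) : ℂ)
        = inner ℂ ((star Y) Ω) ((U t * A * U (-t)) Ω) := by rw [e1]
      _ = inner ℂ Ω (Y ((U t * A * U (-t)) Ω)) := by
          rw [star_eq_adjoint]
          exact ContinuousLinearMap.adjoint_inner_left Y ((U t * A * U (-t)) Ω) Ω
      _ = inner ℂ Ω ((Y * (U t * A * U (-t))) Ω) := rfl
      _ = inner ℂ Ω (((U t * A * U (-t)) * Y) Ω) := by rw [hY _ hB]
      _ = inner ℂ Ω ((U t * A * U (-t)) (Y Ω)) := rfl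
      _ = inner ℂ ((star (U t * A * U (-t))) Ω) (Y Ω) := by
          rw [star_eq_adjoint]
          exact (ContinuousLinearMap.adjoint_inner_left (U t * A * U (-t)) (Y Ω) Ω).symm
      _ = inner ℂ (U t ((star A) Ω)) (Y Ω) := by rw [e56]
      _ = inner ℂ ((star A) Ω) (U (-t) (Y Ω)) := by
          rw [← hstar t, star_eq_adjoint]
          exact (ContinuousLinearMap.adjoint_inner_right (U t) ((star A) Ω) (Y Ω)).symm
  -- the fixed point property
  have hfix : ∀ (Y : H →L[ℂ] H), (∀ A ∈ M, Y * A = A * Y) →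
      ∀ s : ℝ, U s ((star Y) Ω) = (star Y) Ω := by
    intro Y hY s
    set ψ := (star Y) Ω with hψ
    have horth : ∀ χ ∈ {ψ : H | ∃ A ∈ M, ψ = A Ω}, (inner ℂ (U s ψ - ψ) χ : ℂ) = 0 := by
      rintro χ ⟨A, hA, rfl⟩
      obtain ⟨G₁, ⟨C₁, hC₁⟩, hc₁, hd₁, hbd₁⟩ := hpos ψ (A Ω)
      obtain ⟨G₂, ⟨C₂, hC₂⟩, hc₂, hd₂, hbd₂⟩ := hpos ((star A) Ω) (Y Ω)
      set g : ℝ → ℂ := fun t => (inner ℂ ψ (U t (A Ω)) : ℂ) with hg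
      have hbd₂' : ∀ t : ℝ, G₂ (t : ℂ) = g (-t) := by
        intro t
        rw [hbd₂ t, hg]
        have := gid Y hY A hA (-t)
        rw [neg_neg] at this
        exact this.symm
      have hconst : ∀ t : ℝ, g t = g 0 :=
        borchers_two_sided_const hC₁ hc₁ hd₁ hbd₁ hC₂ hc₂ hd₂ hbd₂'
      have h1 : (inner ℂ (U s ψ) (A Ω) : ℂ) = inner ℂ ψ (U (-s) (A Ω)) := by
        rw [← hstar s, star_eq_adjoint]
        exact (ContinuousLinearMap.adjoint_inner_right (U s) ψ (A Ω)).symm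
      have h2 : g (-s) = g 0 := hconst (-s)
      have h3 : g 0 = (inner ℂ ψ (A Ω) : ℂ) := by
        rw [hg]
        simp only [hU0, ContinuousLinearMap.one_apply]
      rw [inner_sub_left, h1]
      have : (inner ℂ ψ (U (-s) (A Ω)) : ℂ) = inner ℂ ψ (A Ω) := by
        have := h2; rw [h3] at this; exact this
      rw [this]
      ring
    have hv : U s ψ - ψ = 0 := by
      have hcont : Continuous fun χ : H => (inner ℂ (U s ψ - ψ) χ : ℂ) :=
        continuous_const.inner continuous_id
      have heq : (fun χ : H => (inner ℂ (U s ψ - ψ) χ : ℂ)) = fun _ => (0 : ℂ) :=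
        Continuous.ext_on hcyc hcont continuous_const horth
      have := congrFun heq (U s ψ - ψ)
      simpa [inner_self_eq_zero] using this
    have := sub_eq_zero.mp hv
    exact this
  -- main argument
  intro X hX
  have hXstar : ∀ A ∈ M, (star X) * A = A * (star X) := by
    intro A hA
    have h1 : X * star A = star A * X := hX (star A) (star_mem hA)
    have := congrArg star h1
    simp only [star_mul, star_star] at this
    exact this.symm
  have h1 := hfix (star X) hXstar
  rw [star_star] at h1
  obtain ⟨c, hc⟩ := hnondeg (X Ω) h1
  refine ⟨c, ?_⟩
  have heq : (X : H → H) = ((c • (1 : H →L[ℂ] H)) : H → H) := by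
    apply Continuous.ext_on hcyc X.continuous (c • (1 : H →L[ℂ] H)).continuous
    rintro χ ⟨A, hA, rfl⟩
    have : X (A Ω) = (X * A) Ω := rfl
    rw [this, hX A hA, ContinuousLinearMap.mul_apply, hc]
    simp
  ext χ
  have := congrFun heq χ
  simpa using this
end

section
/- Let 𝔄 be a unital complex *-algebra, ω a state on 𝔄, α a one-parameter group of *-automorphisms of 𝔄, and β > 0. If ω satisfies the β-KMS condition with respect to α, then ω is invariant under the time evolution: ω(α_t(B)) = ω(B) for all B ∈ 𝔄 and all t ∈ ℝ. -/
open Complex Set Filter intervalIntegral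
open scoped Real Topology

set_option maxHeartbeats 1000000 in
theorem strip_periodic_eq {β : ℝ} (hβ : 0 < β) {F : ℂ → ℂ} {C : ℝ}
    (hC : ∀ z : ℂ, 0 ≤ z.im → z.im ≤ β → ‖F z‖ ≤ C)
    (hcont : ContinuousOn F {z : ℂ | 0 ≤ z.im ∧ z.im ≤ β})
    (hdiff : DifferentiableOn ℂ F {z : ℂ | 0 < z.im ∧ z.im < β})
    (hper : ∀ t : ℝ, F ((t : ℂ) + (β : ℂ) * I) = F (t : ℂ))
    {w₁ w₂ : ℂ} (h1 : 0 < w₁.im ∧ w₁.im < β) (h2 : 0 < w₂.im ∧ w₂.im < β) :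
    F w₁ = F w₂ := by
  set S : Set ℂ := {z : ℂ | 0 < z.im ∧ z.im < β} with hS
  set Sc : Set ℂ := {z : ℂ | 0 ≤ z.im ∧ z.im ≤ β} with hSc
  have hSsub : S ⊆ Sc := fun z hz => ⟨hz.1.le, hz.2.le⟩
  have hSopen : IsOpen S := by
    have : S = Complex.im ⁻¹' Ioo 0 β := rfl
    rw [this]; exact isOpen_Ioo.preimage Complex.continuous_im
  set c : ℝ := 2 * π / β with hcdef
  have hc : 0 < c := by positivity
  have hcβ : c * β = 2 * π := by rw [hcdef]; field_simp
  set ψ : ℂ → ℂ := dslope Complex.exp 0 with hψdef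
  have hψdiff : Differentiable ℂ ψ := by
    rw [← differentiableOn_univ]
    exact (differentiableOn_dslope univ_mem).2 Complex.differentiable_exp.differentiableOn
  have hψ0 : ψ 0 = 1 := by
    rw [hψdef, dslope_same, Complex.deriv_exp, Complex.exp_zero]
  have hψval : ∀ v : ℂ, v ≠ 0 → ψ v = (Complex.exp v - 1) / v := by
    intro v hv
    rw [hψdef, dslope_of_ne _ hv, slope_def_field]
    simp [div_eq_iff hv, Complex.exp_zero]
  have hψne : ∀ v : ℂ, |v.im| < 2 * π → ψ v ≠ 0 := by
    intro v hv
    rcases eq_or_ne v 0 with rfl | hv0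
    · simp [hψ0]
    · rw [hψval v hv0]
      refine div_ne_zero ?_ hv0
      rw [sub_ne_zero]
      intro hexp
      obtain ⟨n, hn⟩ := Complex.exp_eq_one_iff.1 hexp
      have him : v.im = n * (2 * π) := by
        rw [hn]; simp [mul_assoc]
      rw [him] at hv
      have hn0 : n = 0 := by
        rcases eq_or_ne n 0 with h | h
        · exact h
        · exfalso
          have : (1:ℝ) ≤ |(n:ℝ)| := by
            exact_mod_cast Int.one_le_abs h
          have h2π : 0 < 2 * π := by positivity
          rw [abs_mul, abs_of_pos h2π] at hv
          nlinarith [abs_nonneg ((n:ℝ))]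
      rw [hn0] at hn
      simp at hn
      exact hv0 hn
  set φ : ℂ → ℂ := fun u => (ψ ((c : ℂ) * u))⁻¹ with hφdef
  set k : ℂ → ℂ → ℂ := fun w z => (c : ℂ) / (Complex.exp ((c : ℂ) * (z - w)) - 1) with hkdef
  have hφk : ∀ w z : ℂ, z ≠ w → dslope F w z * φ (z - w) = (F z - F w) * k w z := by
    intro w z hzw
    have hu : z - w ≠ 0 := sub_ne_zero.2 hzw
    have hcu : (c : ℂ) * (z - w) ≠ 0 := by
      exact mul_ne_zero (by exact_mod_cast hc.ne') hu
    rw [dslope_of_ne _ hzw, slope_def_field, hφdef]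
    simp only []
    rw [hψval _ hcu, inv_div, hkdef]
    simp only []
    rw [div_mul_div_comm, mul_div_assoc]
    congr 1
    rcases eq_or_ne (Complex.exp ((c:ℂ) * (z - w)) - 1) 0 with hE | hE
    · rw [hE]; simp
    · field_simp
  have hkper : ∀ w z : ℂ, k w (z + (β : ℂ) * I) = k w z := by
    intro w z
    rw [hkdef]
    simp only []
    congr 2
    rw [show (c:ℂ) * (z + (β:ℂ) * I - w) = (c:ℂ) * (z - w) + ((c:ℂ) * (β:ℂ)) * I by ring]
    rw [show ((c:ℂ)) * (β:ℂ) = ((c * β : ℝ) : ℂ) by push_cast; ring, hcβ]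
    push_cast
    rw [Complex.exp_add, Complex.exp_two_pi_mul_I, mul_one]
  have him : ∀ {w z : ℂ}, w ∈ S → z ∈ Sc → |(((c:ℂ)) * (z - w)).im| < 2 * π := by
    intro w z hw hz
    have : (((c:ℂ)) * (z - w)).im = c * (z.im - w.im) := by
      simp [Complex.mul_im, Complex.sub_im]
    rw [this, abs_mul, abs_of_pos hc]
    have h1 : |z.im - w.im| < β := by
      rw [abs_lt]; constructor <;> [nlinarith [hz.1, hz.2, hw.1, hw.2]; nlinarith [hz.1, hz.2, hw.1, hw.2]]
    calc c * |z.im - w.im| < c * β := by nlinarith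
      _ = 2 * π := hcβ
  have hφdiffAt : ∀ {w z : ℂ}, w ∈ S → z ∈ Sc → DifferentiableAt ℂ (fun z => φ (z - w)) z := by
    intro w z hw hz
    refine DifferentiableAt.inv ?_ (hψne _ (him hw hz))
    exact (hψdiff _).comp z (by fun_prop)
  have hw1 : w₁ ∈ S := h1
  have hw2 : w₂ ∈ S := h2
  have hFw : ∀ w ∈ S, DifferentiableAt ℂ F w := fun w hw =>
    hdiff.differentiableAt (hSopen.mem_nhds hw)
  have hdsl_cont : ∀ w ∈ S, ContinuousOn (dslope F w) Sc := by
    intro w hw z hz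
    rcases eq_or_ne z w with rfl | hzw
    · exact (continuousAt_dslope_same.2 (hFw z hw)).continuousWithinAt
    · exact (continuousWithinAt_dslope_of_ne hzw).2 (hcont z hz)
  have hdsl_diff : ∀ w ∈ S, DifferentiableOn ℂ (dslope F w) S := fun w hw =>
    (differentiableOn_dslope (hSopen.mem_nhds hw)).2 hdiff
  set h : ℂ → ℂ := fun z => dslope F w₁ z * φ (z - w₁) - dslope F w₂ z * φ (z - w₂) with hhdef
  have hconth : ContinuousOn h Sc := by
    refine ContinuousOn.sub ?_ ?_
    · exact (hdsl_cont _ hw1).mul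
        (fun z hz => (hφdiffAt hw1 hz).continuousAt.continuousWithinAt)
    · exact (hdsl_cont _ hw2).mul
        (fun z hz => (hφdiffAt hw2 hz).continuousAt.continuousWithinAt)
  have hdiffh : ∀ z ∈ S, DifferentiableAt ℂ h z := by
    intro z hz
    exact (((hdsl_diff _ hw1).differentiableAt (hSopen.mem_nhds hz)).mul
        (hφdiffAt hw1 (hSsub hz))).sub
      (((hdsl_diff _ hw2).differentiableAt (hSopen.mem_nhds hz)).mul
        (hφdiffAt hw2 (hSsub hz)))
  have hval : ∀ z : ℂ, z ≠ w₁ → z ≠ w₂ →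
      h z = (F z - F w₁) * k w₁ z - (F z - F w₂) * k w₂ z := by
    intro z hz1 hz2
    rw [hhdef]
    simp only []
    rw [hφk _ _ hz1, hφk _ _ hz2]
  have hne_real : ∀ (x : ℝ) (w : ℂ), w ∈ S → (x : ℂ) ≠ w := by
    intro x w hw hx
    have := hw.1
    rw [← hx] at this
    simp at this
  have hne_top : ∀ (x : ℝ) (w : ℂ), w ∈ S → (x : ℂ) + (β : ℂ) * I ≠ w := by
    intro x w hw hx
    have := hw.2
    rw [← hx] at this
    simp at this
  have hhor : ∀ x : ℝ, h ((x : ℂ) + (β : ℂ) * I) = h (x : ℂ) := by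
    intro x
    rw [hval _ (hne_top x _ hw1) (hne_top x _ hw2), hval _ (hne_real x _ hw1) (hne_real x _ hw2),
      hper x, hkper w₁ (x : ℂ), hkper w₂ (x : ℂ)]
  set G : ℝ → ℂ := fun R => ∫ y in (0:ℝ)..β, h ((R : ℂ) + (y : ℂ) * I) with hGdef
  have hGeq : ∀ T : ℝ, G T = G (-T) := by
    intro T
    have hmin : min (0:ℝ) β = 0 := min_eq_left hβ.le
    have hmax : max (0:ℝ) β = β := max_eq_right hβ.le
    have key := Complex.integral_boundary_rect_eq_zero_of_continuousOn_of_differentiableOn h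
      (((-T : ℝ) : ℂ)) ((T : ℂ) + (β : ℂ) * I) ?_ ?_
    rotate_left
    · apply hconth.mono
      intro z hz
      rw [Complex.mem_reProdIm] at hz
      have h2 := hz.2
      simp only [Complex.add_im, Complex.ofReal_im, Complex.mul_I_im, Complex.ofReal_re,
        zero_add] at h2
      rw [Set.uIcc_of_le hβ.le] at h2
      exact ⟨h2.1, h2.2⟩
    · refine fun z hz => (hdiffh z ?_).differentiableWithinAt
      rw [Complex.mem_reProdIm] at hz
      have h2 := hz.2
      simp only [Complex.add_im, Complex.ofReal_im, Complex.mul_I_im, Complex.ofReal_re,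
        zero_add, hmin, hmax] at h2
      exact ⟨h2.1, h2.2⟩
    · simp only [Complex.add_re, Complex.add_im, Complex.ofReal_re, Complex.ofReal_im,
        Complex.mul_I_re, Complex.mul_I_im, neg_zero, add_zero, zero_add,
        Complex.ofReal_zero, zero_mul] at key
      have e1 : (∫ x : ℝ in (-T)..T, h ((x : ℂ) + (β : ℂ) * I))
          = ∫ x : ℝ in (-T)..T, h (x : ℂ) :=
        intervalIntegral.integral_congr (fun x _ => hhor x)
      rw [e1, sub_self, zero_add, sub_eq_zero, smul_eq_mul, smul_eq_mul] at key
      exact mul_left_cancel₀ Complex.I_ne_zero key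
  -- limits as T → ∞
  have hC0 : 0 ≤ C := le_trans (norm_nonneg (F 0)) (hC 0 (by simp) (by simp [hβ.le]))
  set R₀ : ℝ := max ‖w₁‖ ‖w₂‖ with hR₀def
  have hRw : ∀ w : ℂ, w = w₁ ∨ w = w₂ → |w.re| ≤ R₀ := by
    rintro w (rfl | rfl)
    · exact le_trans (Complex.abs_re_le_norm w) (le_max_left _ _)
    · exact le_trans (Complex.abs_re_le_norm w) (le_max_right _ _)
  have hEnorm : ∀ w z : ℂ, ‖Complex.exp ((c:ℂ) * (z - w))‖ = Real.exp (c * (z.re - w.re)) := by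
    intro w z
    rw [Complex.norm_exp]
    congr 1
    simp [Complex.mul_re]
  have hFsub : ∀ z ∈ Sc, ∀ w : ℂ, w = w₁ ∨ w = w₂ → ‖F z - F w‖ ≤ 2 * C := by
    intro z hz w hw
    have hwSc : w ∈ Sc := by rcases hw with rfl | rfl; exacts [hSsub hw1, hSsub hw2]
    calc ‖F z - F w‖ ≤ ‖F z‖ + ‖F w‖ := norm_sub_le _ _
      _ ≤ 2 * C := by
          have := hC z hz.1 hz.2; have := hC w hwSc.1 hwSc.2; linarith
  have hzSc : ∀ (x y : ℝ), y ∈ Set.uIoc (0:ℝ) β → ((x:ℂ) + (y:ℂ) * I) ∈ Sc := by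
    intro x y hy
    rw [Set.uIoc_of_le hβ.le] at hy
    constructor
    · simp only [Complex.add_im, Complex.ofReal_im, Complex.mul_I_im, Complex.ofReal_re, zero_add]
      exact hy.1.le
    · simp only [Complex.add_im, Complex.ofReal_im, Complex.mul_I_im, Complex.ofReal_re, zero_add]
      exact hy.2
  have hzne : ∀ (x y : ℝ) (w : ℂ), |w.re| ≤ R₀ → R₀ < |x| → ((x:ℂ) + (y:ℂ) * I) ≠ w := by
    intro x y w hw hx hxy
    have : ((x:ℂ) + (y:ℂ) * I).re = x := by
      simp [Complex.add_re, Complex.mul_I_re]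
    rw [← hxy] at hw
    rw [this] at hw
    linarith [hx]
  -- right edge tendsto 0
  have hright : Tendsto G atTop (𝓝 0) := by
    have hDen : Tendsto (fun T : ℝ => Real.exp (c * (T - R₀)) - 1) atTop atTop := by
      apply tendsto_atTop_add_const_right
      exact Real.tendsto_exp_atTop.comp
        ((tendsto_atTop_add_const_right atTop (c * (-R₀))
          ((tendsto_id (α := ℝ)).const_mul_atTop hc)).congr (by intro x; simp only [id_eq]; ring))
    have hgR : Tendsto (fun T : ℝ => 4 * C * (c * (Real.exp (c * (T - R₀)) - 1)⁻¹) * |β|)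
        atTop (𝓝 0) := by
      have := (hDen.inv_tendsto_atTop).const_mul (c : ℝ)
      have := (this.const_mul (4 * C)).mul_const |β|
      simpa using this
    apply squeeze_zero_norm' _ hgR
    have hev : ∀ᶠ T : ℝ in atTop, 2 ≤ Real.exp (c * (T - R₀)) ∧ R₀ < T := by
      filter_upwards [hDen.eventually_ge_atTop 1, eventually_gt_atTop R₀] with T h1 h2
      exact ⟨by linarith, h2⟩
    filter_upwards [hev] with T hT
    have hTabs : R₀ < |T| := lt_of_lt_of_le hT.2 (le_abs_self T)
    have hm1 : (0:ℝ) < Real.exp (c * (T - R₀)) - 1 := by linarith [hT.1]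
    rw [hGdef]
    refine le_trans (intervalIntegral.norm_integral_le_of_norm_le_const
      (C := 4 * C * (c * (Real.exp (c * (T - R₀)) - 1)⁻¹)) ?_) ?_
    · intro y hy
      have hz1 : ((T:ℂ) + (y:ℂ) * I) ≠ w₁ := hzne T y w₁ (hRw _ (Or.inl rfl)) hTabs
      have hz2 : ((T:ℂ) + (y:ℂ) * I) ≠ w₂ := hzne T y w₂ (hRw _ (Or.inr rfl)) hTabs
      rw [hval _ hz1 hz2]
      have hkb : ∀ w : ℂ, w = w₁ ∨ w = w₂ →
          ‖k w ((T:ℂ) + (y:ℂ) * I)‖ ≤ c * (Real.exp (c * (T - R₀)) - 1)⁻¹ := by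
        intro w hw
        rw [hkdef]
        simp only []
        rw [norm_div]
        have hre : ((T:ℂ) + (y:ℂ) * I).re = T := by simp [Complex.add_re, Complex.mul_I_re]
        have hEge : Real.exp (c * (T - R₀)) ≤ ‖Complex.exp ((c:ℂ) * (((T:ℂ) + (y:ℂ) * I) - w))‖ := by
          rw [hEnorm, hre]
          apply Real.exp_le_exp.2
          have hre2 : w.re ≤ R₀ := le_trans (le_abs_self _) (hRw w hw)
          nlinarith [mul_nonneg hc.le (sub_nonneg.2 hre2)]
        have hden : Real.exp (c * (T - R₀)) - 1 ≤
            ‖Complex.exp ((c:ℂ) * (((T:ℂ) + (y:ℂ) * I) - w)) - 1‖ := by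
          calc Real.exp (c * (T - R₀)) - 1
              ≤ ‖Complex.exp ((c:ℂ) * (((T:ℂ) + (y:ℂ) * I) - w))‖ - 1 := by linarith
            _ ≤ _ := by
                have := norm_sub_norm_le (Complex.exp ((c:ℂ) * (((T:ℂ) + (y:ℂ) * I) - w))) 1
                simpa using this
        rw [div_eq_mul_inv]
        have hcn : ‖((c:ℝ) : ℂ)‖ = c := by
          rw [Complex.norm_real, Real.norm_eq_abs, abs_of_pos hc]
        rw [hcn]
        gcongr
      calc ‖(F ((T:ℂ) + (y:ℂ) * I) - F w₁) * k w₁ ((T:ℂ) + (y:ℂ) * I)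
            - (F ((T:ℂ) + (y:ℂ) * I) - F w₂) * k w₂ ((T:ℂ) + (y:ℂ) * I)‖
          ≤ ‖(F ((T:ℂ) + (y:ℂ) * I) - F w₁) * k w₁ ((T:ℂ) + (y:ℂ) * I)‖
            + ‖(F ((T:ℂ) + (y:ℂ) * I) - F w₂) * k w₂ ((T:ℂ) + (y:ℂ) * I)‖ := norm_sub_le _ _
        _ ≤ (2*C) * (c * (Real.exp (c * (T - R₀)) - 1)⁻¹)
            + (2*C) * (c * (Real.exp (c * (T - R₀)) - 1)⁻¹) := by
            rw [norm_mul, norm_mul]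
            gcongr
            · exact hFsub _ (hzSc T y hy) w₁ (Or.inl rfl)
            · exact hkb w₁ (Or.inl rfl)
            · exact hFsub _ (hzSc T y hy) w₂ (Or.inr rfl)
            · exact hkb w₂ (Or.inr rfl)
        _ = 4 * C * (c * (Real.exp (c * (T - R₀)) - 1)⁻¹) := by ring
    · exact le_of_eq (by rw [sub_zero])
  have hcnorm : ‖((c:ℝ) : ℂ)‖ = c := by
    rw [Complex.norm_real, Real.norm_eq_abs, abs_of_pos hc]
  have hIntEdge : ∀ R : ℝ,
      IntervalIntegrable (fun y => h ((R:ℂ) + (y:ℂ) * I)) MeasureTheory.volume 0 β := by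
    intro R
    apply ContinuousOn.intervalIntegrable
    apply hconth.comp (Continuous.continuousOn (by fun_prop))
    intro y hy
    rw [Set.uIcc_of_le hβ.le] at hy
    constructor
    · simp only [Complex.add_im, Complex.ofReal_im, Complex.mul_I_im, Complex.ofReal_re, zero_add]
      exact hy.1
    · simp only [Complex.add_im, Complex.ofReal_im, Complex.mul_I_im, Complex.ofReal_re, zero_add]
      exact hy.2
  have hleft : Tendsto (fun T : ℝ => G (-T)) atTop (𝓝 (((2*π:ℝ) : ℂ) * (F w₁ - F w₂))) := by
    rw [← tendsto_sub_nhds_zero_iff]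
    have hES : Tendsto (fun T : ℝ => Real.exp (c * (R₀ - T))) atTop (𝓝 0) := by
      apply Real.tendsto_exp_atBot.comp
      have hbase : Tendsto (fun T : ℝ => c * T) atTop atTop :=
        (tendsto_id (α := ℝ)).const_mul_atTop hc
      have hneg : Tendsto (fun T : ℝ => -(c * T)) atTop atBot := tendsto_neg_atTop_atBot.comp hbase
      exact (tendsto_atBot_add_const_right atTop (c * R₀) hneg).congr (by intro x; ring)
    have hgL : Tendsto (fun T : ℝ => 8 * C * (c * Real.exp (c * (R₀ - T))) * |β|)
        atTop (𝓝 0) := by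
      have := ((hES.const_mul c).const_mul (8 * C)).mul_const |β|
      simpa using this
    apply squeeze_zero_norm' _ hgL
    have hev : ∀ᶠ T : ℝ in atTop, Real.exp (c * (R₀ - T)) ≤ 1/2 ∧ R₀ < T := by
      filter_upwards [hES.eventually_lt_const (by norm_num : (0:ℝ) < 1/2),
        eventually_gt_atTop R₀] with T hA hB
      exact ⟨hA.le, hB⟩
    filter_upwards [hev] with T hT
    have hTabs : R₀ < |(-T)| := by
      rw [abs_neg]; exact lt_of_lt_of_le hT.2 (le_abs_self T)
    have hconst : (∫ _ in (0:ℝ)..β, ((c:ℂ) * (F w₁ - F w₂)))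
        = ((2*π:ℝ):ℂ) * (F w₁ - F w₂) := by
      rw [intervalIntegral.integral_const, sub_zero, Complex.real_smul,
        ← mul_assoc, ← Complex.ofReal_mul, mul_comm β c, hcβ]
    have hsplit : G (-T) - ((2*π:ℝ):ℂ) * (F w₁ - F w₂)
        = ∫ y in (0:ℝ)..β, (h (((-T : ℝ):ℂ) + (y:ℂ) * I) - (c:ℂ) * (F w₁ - F w₂)) := by
      rw [intervalIntegral.integral_sub (hIntEdge (-T)) intervalIntegrable_const, hconst, hGdef]
    rw [hsplit]
    refine le_trans (intervalIntegral.norm_integral_le_of_norm_le_const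
      (C := 8 * C * (c * Real.exp (c * (R₀ - T)))) ?_) (le_of_eq (by rw [sub_zero]))
    intro y hy
    have hz1 : (((-T : ℝ):ℂ) + (y:ℂ) * I) ≠ w₁ := hzne (-T) y w₁ (hRw _ (Or.inl rfl)) hTabs
    have hz2 : (((-T : ℝ):ℂ) + (y:ℂ) * I) ≠ w₂ := hzne (-T) y w₂ (hRw _ (Or.inr rfl)) hTabs
    have hdiffval : h (((-T : ℝ):ℂ) + (y:ℂ) * I) - (c:ℂ) * (F w₁ - F w₂)
        = (F (((-T : ℝ):ℂ) + (y:ℂ) * I) - F w₁) * (k w₁ (((-T : ℝ):ℂ) + (y:ℂ) * I) + c)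
          - (F (((-T : ℝ):ℂ) + (y:ℂ) * I) - F w₂) * (k w₂ (((-T : ℝ):ℂ) + (y:ℂ) * I) + c) := by
      rw [hval _ hz1 hz2]; ring
    rw [hdiffval]
    have hkcb : ∀ w : ℂ, w = w₁ ∨ w = w₂ →
        ‖k w (((-T : ℝ):ℂ) + (y:ℂ) * I) + (c:ℂ)‖ ≤ 2 * c * Real.exp (c * (R₀ - T)) := by
      intro w hw
      set z : ℂ := ((-T : ℝ):ℂ) + (y:ℂ) * I with hzdef
      set E : ℂ := Complex.exp ((c:ℂ) * (z - w)) with hEdef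
      have hre : z.re = -T := by
        rw [hzdef]; simp [Complex.add_re, Complex.mul_I_re]
      have hEle : ‖E‖ ≤ Real.exp (c * (R₀ - T)) := by
        rw [hEdef, hEnorm, hre]
        apply Real.exp_le_exp.2
        have hre2 : -w.re ≤ R₀ := le_trans (neg_le_abs _) (hRw w hw)
        nlinarith [mul_nonneg hc.le (sub_nonneg.2 hre2)]
      have hElt : ‖E‖ ≤ 1/2 := le_trans hEle hT.1
      have hE1 : (1:ℝ)/2 ≤ ‖E - 1‖ := by
        have := norm_sub_norm_le (1 : ℂ) E
        rw [norm_one, norm_sub_rev] at this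
        linarith
      have hEne : E - 1 ≠ 0 := by
        intro h0
        rw [h0, norm_zero] at hE1
        linarith
      have hform : k w z + (c:ℂ) = (c:ℂ) * E / (E - 1) := by
        rw [hkdef]
        simp only [← hEdef]
        field_simp
        ring
      rw [hform, norm_div, norm_mul, hcnorm]
      calc c * ‖E‖ / ‖E - 1‖ ≤ c * Real.exp (c * (R₀ - T)) / (1/2) := by gcongr
        _ = 2 * c * Real.exp (c * (R₀ - T)) := by ring
    calc ‖(F (((-T : ℝ):ℂ) + (y:ℂ) * I) - F w₁) * (k w₁ (((-T : ℝ):ℂ) + (y:ℂ) * I) + c)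
          - (F (((-T : ℝ):ℂ) + (y:ℂ) * I) - F w₂) * (k w₂ (((-T : ℝ):ℂ) + (y:ℂ) * I) + c)‖
        ≤ ‖(F (((-T : ℝ):ℂ) + (y:ℂ) * I) - F w₁) * (k w₁ (((-T : ℝ):ℂ) + (y:ℂ) * I) + c)‖
          + ‖(F (((-T : ℝ):ℂ) + (y:ℂ) * I) - F w₂) * (k w₂ (((-T : ℝ):ℂ) + (y:ℂ) * I) + c)‖ :=
        norm_sub_le _ _
      _ ≤ (2 * C) * (2 * c * Real.exp (c * (R₀ - T)))
          + (2 * C) * (2 * c * Real.exp (c * (R₀ - T))) := by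
          rw [norm_mul, norm_mul]
          gcongr
          · exact hFsub _ (hzSc (-T) y hy) w₁ (Or.inl rfl)
          · exact hkcb w₁ (Or.inl rfl)
          · exact hFsub _ (hzSc (-T) y hy) w₂ (Or.inr rfl)
          · exact hkcb w₂ (Or.inr rfl)
      _ = 8 * C * (c * Real.exp (c * (R₀ - T))) := by ring
  have h0 : Tendsto (fun T : ℝ => G (-T)) atTop (𝓝 0) := hright.congr hGeq
  have hEq := tendsto_nhds_unique h0 hleft
  have h2π : ((2*π:ℝ):ℂ) ≠ 0 := Complex.ofReal_ne_zero.mpr (by positivity)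
  have := (mul_eq_zero.1 hEq.symm).resolve_left h2π
  exact sub_eq_zero.1 this



/-- A β-KMS state on a unital complex *-algebra is invariant under the one-parameter group of
*-automorphisms: `ω(α_t(B)) = ω(B)`. -/
theorem kms_state_is_invariant
    {A : Type*} [Ring A] [Algebra ℂ A] [StarRing A]
    (ω : A →ₗ[ℂ] ℂ)
    (hω1 : ω 1 = 1)
    (hωpos : ∀ a : A, ∃ r : ℝ, 0 ≤ r ∧ ω (star a * a) = (r : ℂ))
    (α : ℝ → (A ≃⋆ₐ[ℂ] A))
    (hα0 : ∀ a : A, α 0 a = a)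
    (hαadd : ∀ (s t : ℝ) (a : A), α (s + t) a = α s (α t a))
    (β : ℝ) (hβ : 0 < β)
    (hKMS : ∀ a b : A, ∃ F : ℂ → ℂ,
      (∃ C : ℝ, ∀ z : ℂ, 0 ≤ z.im → z.im ≤ β → ‖F z‖ ≤ C) ∧
      ContinuousOn F {z : ℂ | 0 ≤ z.im ∧ z.im ≤ β} ∧
      DifferentiableOn ℂ F {z : ℂ | 0 < z.im ∧ z.im < β} ∧
      (∀ t : ℝ, F (t : ℂ) = ω (a * α t b)) ∧
      (∀ t : ℝ, F ((t : ℂ) + (β : ℂ) * Complex.I) = ω (α t b * a))) :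
    ∀ (b : A) (t : ℝ), ω (α t b) = ω b := by
  intro b t
  obtain ⟨F, ⟨C, hC⟩, hcont, hdiff, hF0, hFβ⟩ := hKMS 1 b
  have hper : ∀ s : ℝ, F ((s : ℂ) + (β : ℂ) * I) = F (s : ℂ) := by
    intro s
    rw [hFβ s, hF0 s, mul_one, one_mul]
  have hint : ∀ {w₁ w₂ : ℂ}, (0 < w₁.im ∧ w₁.im < β) → (0 < w₂.im ∧ w₂.im < β) →
      F w₁ = F w₂ := fun hw1 hw2 => strip_periodic_eq hβ hC hcont hdiff hper hw1 hw2
  -- boundary values agree with the constant by continuity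
  have hbdry : ∀ x : ℝ, F (x : ℂ) = F 0 := by
    have key : ∀ x : ℝ, Tendsto (fun ε : ℝ => F ((x : ℂ) + (ε : ℂ) * I))
        (𝓝[>] (0:ℝ)) (𝓝 (F (x : ℂ))) := by
      intro x
      have hmem : (x : ℂ) ∈ {z : ℂ | 0 ≤ z.im ∧ z.im ≤ β} := by
        constructor <;> simp [hβ.le]
      have hcw : ContinuousWithinAt F {z : ℂ | 0 ≤ z.im ∧ z.im ≤ β} (x : ℂ) := hcont _ hmem
      apply hcw.tendsto.comp
      rw [tendsto_nhdsWithin_iff]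
      constructor
      · have : Tendsto (fun ε : ℝ => (x : ℂ) + (ε : ℂ) * I) (𝓝 0) (𝓝 (x : ℂ)) := by
          have hcont2 : Continuous fun ε : ℝ => (x : ℂ) + (ε : ℂ) * I := by fun_prop
          have := hcont2.tendsto 0
          simpa using this
        exact this.mono_left nhdsWithin_le_nhds
      · filter_upwards [Ioo_mem_nhdsGT_of_mem (Set.mem_Ico.2 ⟨le_refl (0:ℝ), hβ⟩)]
          with ε hε
        constructor <;>
          simp only [Set.mem_setOf_eq, Complex.add_im, Complex.ofReal_im, Complex.mul_I_im,
            Complex.ofReal_re, zero_add]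
        · exact hε.1.le
        · exact hε.2.le
    intro x
    have hmemS : ∀ (x : ℝ) (ε : ℝ), ε ∈ Set.Ioo 0 β →
        (0 < ((x:ℂ) + (ε:ℂ) * I).im ∧ ((x:ℂ) + (ε:ℂ) * I).im < β) := by
      intro x ε hε
      constructor <;>
        simp only [Complex.add_im, Complex.ofReal_im, Complex.mul_I_im, Complex.ofReal_re,
          zero_add]
      · exact hε.1
      · exact hε.2
    have h00 : Tendsto (fun ε : ℝ => F ((x:ℂ) + (ε:ℂ) * I)) (𝓝[>] (0:ℝ))
        (𝓝 (F (((0:ℝ):ℂ)))) := by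
      refine (key 0).congr' ?_
      filter_upwards [Ioo_mem_nhdsGT_of_mem (Set.mem_Ico.2 ⟨le_refl (0:ℝ), hβ⟩)] with ε hε
      exact hint (hmemS 0 ε hε) (hmemS x ε hε)
    have := tendsto_nhds_unique (key x) h00
    rw [this]
    norm_num
  have h1 : ω (α t b) = F (t : ℂ) := by rw [hF0 t, one_mul]
  have h2 : ω b = F 0 := by
    have := hF0 0
    rw [hα0 b, one_mul] at this
    exact_mod_cast this.symm
  rw [h1, h2, hbdry t]
end

section
/- Let 𝔄 be a commutative unital complex *-algebra, ω a state on 𝔄, α a one-parameter group of *-automorphisms of 𝔄, and β > 0. If ω satisfies the β-KMS condition with respect to α, then ω(A·α_t(B)) = ω(A·B) for all A, B ∈ 𝔄 and all t ∈ ℝ. -/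
open Complex Set intervalIntegral Metric Filter

noncomputable section

namespace KMSAux

/-- `mkC x y = x + y i`. -/
def mkC (x y : ℝ) : ℂ := (x : ℂ) + (y : ℂ) * I

@[simp] lemma mkC_re (x y : ℝ) : (mkC x y).re = x := by simp [mkC]
@[simp] lemma mkC_im (x y : ℝ) : (mkC x y).im = y := by simp [mkC]

/-- The Cauchy rectangle boundary integral expression. -/
def rectInt (f : ℂ → ℂ) (z w : ℂ) : ℂ :=
  (∫ x : ℝ in z.re..w.re, f (x + z.im * I)) - (∫ x : ℝ in z.re..w.re, f (x + w.im * I)) +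
    I • (∫ y : ℝ in z.im..w.im, f (w.re + y * I)) -
    I • (∫ y : ℝ in z.im..w.im, f (z.re + y * I))

lemma contAux (f : ℂ → ℂ) (hc : Continuous f) (r : ℝ) :
    Continuous fun y : ℝ => f ((r : ℂ) + (y : ℂ) * I) := by
  fun_prop

lemma contAux' (f : ℂ → ℂ) (hc : Continuous f) (r : ℝ) :
    Continuous fun x : ℝ => f ((x : ℂ) + (r : ℂ) * I) := by
  fun_prop

lemma rectInt_split (f : ℂ → ℂ) (hc : Continuous f) (z w : ℂ) (m : ℝ) :
    rectInt f z w = rectInt f z (mkC w.re m) + rectInt f (mkC z.re m) w := by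
  have h1 : (∫ y : ℝ in z.im..m, f ((w.re : ℂ) + (y:ℂ) * I)) +
      (∫ y : ℝ in m..w.im, f ((w.re:ℂ) + (y:ℂ) * I)) =
      ∫ y : ℝ in z.im..w.im, f ((w.re:ℂ) + (y:ℂ) * I) :=
    integral_add_adjacent_intervals ((contAux f hc w.re).intervalIntegrable _ _)
      ((contAux f hc w.re).intervalIntegrable _ _)
  have h2 : (∫ y : ℝ in z.im..m, f ((z.re : ℂ) + (y:ℂ) * I)) +
      (∫ y : ℝ in m..w.im, f ((z.re:ℂ) + (y:ℂ) * I)) =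
      ∫ y : ℝ in z.im..w.im, f ((z.re:ℂ) + (y:ℂ) * I) :=
    integral_add_adjacent_intervals ((contAux f hc z.re).intervalIntegrable _ _)
      ((contAux f hc z.re).intervalIntegrable _ _)
  simp only [rectInt, mkC_re, mkC_im, smul_eq_mul]
  linear_combination I * h2 - I * h1

lemma rectInt_zero (f : ℂ → ℂ) (hc : Continuous f) (z w : ℂ)
    (hd : ∀ u : ℂ, u.im ∈ Set.Ioo (min z.im w.im) (max z.im w.im) → DifferentiableAt ℂ f u) :
    rectInt f z w = 0 := by
  have := integral_boundary_rect_eq_zero_of_continuousOn_of_differentiableOn f z w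
    hc.continuousOn
    (fun u hu => (hd u ((mem_reProdIm.mp hu).2)).differentiableWithinAt)
  simpa [rectInt] using this

lemma aux_between {a y₀ δ x : ℝ} (ha : |a - y₀| < δ) (hx : x ∈ Set.Ioo (min a y₀) (max a y₀)) :
    |x - y₀| < δ ∧ x ≠ y₀ := by
  obtain ⟨h1, h2⟩ := hx
  rcases le_total a y₀ with h | h
  · rw [min_eq_left h] at h1
    rw [max_eq_right h] at h2
    constructor
    · rw [abs_sub_lt_iff] at ha ⊢; constructor <;> nlinarith
    · exact ne_of_lt h2
  · rw [min_eq_right h] at h1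
    rw [max_eq_left h] at h2
    constructor
    · rw [abs_sub_lt_iff] at ha ⊢; constructor <;> nlinarith
    · exact (ne_of_lt h1).symm

lemma rectInt_zero_line {f : ℂ → ℂ} (hc : Continuous f) {y₀ δ : ℝ}
    (hd : ∀ u : ℂ, |u.im - y₀| < δ → u.im ≠ y₀ → DifferentiableAt ℂ f u)
    {z w : ℂ} (hz : |z.im - y₀| < δ) (hw : |w.im - y₀| < δ) :
    rectInt f z w = 0 := by
  rw [rectInt_split f hc z w y₀]
  have e1 : rectInt f z (mkC w.re y₀) = 0 := by
    apply rectInt_zero f hc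
    intro u hu
    simp only [mkC_im] at hu
    obtain ⟨h1, h2⟩ := aux_between hz hu
    exact hd u h1 h2
  have e2 : rectInt f (mkC z.re y₀) w = 0 := by
    apply rectInt_zero f hc
    intro u hu
    simp only [mkC_im] at hu
    rw [min_comm, max_comm] at hu
    obtain ⟨h1, h2⟩ := aux_between hw hu
    exact hd u h1 h2
  rw [e1, e2, add_zero]

lemma mem_uIoc_abs {a b x : ℝ} (h : x ∈ Set.uIoc a b) : |x - a| ≤ |b - a| := by
  rcases le_total a b with hab | hab
  · rw [uIoc_of_le hab] at h
    rw [_root_.abs_of_nonneg (by linarith [h.1.le]), _root_.abs_of_nonneg (by linarith)]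
    linarith [h.2]
  · rw [uIoc_of_ge hab] at h
    rw [_root_.abs_of_nonpos (by linarith [h.2]), _root_.abs_of_nonpos (by linarith)]
    linarith [h.1.le]


lemma removable_line {f : ℂ → ℂ} (hc : Continuous f) {y₀ δ : ℝ} (hδ : 0 < δ)
    (hd : ∀ u : ℂ, |u.im - y₀| < δ → u.im ≠ y₀ → DifferentiableAt ℂ f u) :
    ∀ z : ℂ, |z.im - y₀| < δ → DifferentiableAt ℂ f z := by
  set H : ℂ → ℂ := fun z =>
    (∫ x : ℝ in (0:ℝ)..z.re, f ((x:ℂ) + (y₀:ℂ) * I)) +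
      I • ∫ y : ℝ in y₀..z.im, f ((z.re:ℂ) + (y:ℂ) * I) with hH
  have key : ∀ z w : ℂ, |z.im - y₀| < δ → |w.im - y₀| < δ →
      H w - H z = (∫ x : ℝ in z.re..w.re, f ((x:ℂ) + (z.im:ℂ) * I)) +
        I • ∫ y : ℝ in z.im..w.im, f ((w.re:ℂ) + (y:ℂ) * I) := by
    intro z w hz hw
    have h1 : (∫ x : ℝ in (0:ℝ)..z.re, f ((x:ℂ) + (y₀:ℂ) * I)) +
        (∫ x : ℝ in z.re..w.re, f ((x:ℂ) + (y₀:ℂ) * I)) =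
        ∫ x : ℝ in (0:ℝ)..w.re, f ((x:ℂ) + (y₀:ℂ) * I) :=
      integral_add_adjacent_intervals ((contAux' f hc y₀).intervalIntegrable _ _)
        ((contAux' f hc y₀).intervalIntegrable _ _)
    have h2 : (∫ y : ℝ in y₀..z.im, f ((w.re:ℂ) + (y:ℂ) * I)) +
        (∫ y : ℝ in z.im..w.im, f ((w.re:ℂ) + (y:ℂ) * I)) =
        ∫ y : ℝ in y₀..w.im, f ((w.re:ℂ) + (y:ℂ) * I) :=
      integral_add_adjacent_intervals ((contAux f hc w.re).intervalIntegrable _ _)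
        ((contAux f hc w.re).intervalIntegrable _ _)
    have h0 : rectInt f (mkC z.re y₀) (mkC w.re z.im) = 0 := by
      exact rectInt_zero_line hc hd (by simp [hδ]) (by simpa using hz)
    simp only [rectInt, mkC_re, mkC_im, smul_eq_mul] at h0 ⊢
    simp only [hH, smul_eq_mul]
    linear_combination h0 - h1 - I * h2
  have hder : ∀ z : ℂ, |z.im - y₀| < δ → HasDerivAt H (f z) z := by
    intro z hz
    rw [hasDerivAt_iff_isLittleO, Asymptotics.isLittleO_iff]
    intro c hc0
    obtain ⟨r, hr0, hr⟩ := Metric.continuousAt_iff.mp (hc.continuousAt (x := z)) (c/2) (by linarith)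
    have hρ : 0 < min (r/2) ((δ - |z.im - y₀|)/2) := by
      apply lt_min (by linarith)
      have := abs_nonneg (z.im - y₀); linarith [hz]
    filter_upwards [Metric.ball_mem_nhds z hρ] with w hw
    have hwr : dist w z < r/2 := lt_of_lt_of_le hw (min_le_left _ _)
    have hwδ : dist w z < (δ - |z.im - y₀|)/2 := lt_of_lt_of_le hw (min_le_right _ _)
    have hdist : ∀ u : ℂ, dist u z ≤ 2 * dist w z → dist u z < r := by
      intro u hu; linarith
    have hwim : |w.im - y₀| < δ := by
      have h1 : |w.im - z.im| ≤ dist w z := by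
        rw [Complex.dist_eq]
        simpa using Complex.abs_im_le_norm (w - z)
      calc |w.im - y₀| ≤ |w.im - z.im| + |z.im - y₀| := abs_sub_le _ _ _
        _ < δ := by linarith
    have hre : |w.re - z.re| ≤ dist w z := by
      rw [Complex.dist_eq]; simpa using Complex.abs_re_le_norm (w - z)
    have him : |w.im - z.im| ≤ dist w z := by
      rw [Complex.dist_eq]; simpa using Complex.abs_im_le_norm (w - z)
    have e1 : (∫ x : ℝ in z.re..w.re, f ((x:ℂ) + (z.im:ℂ) * I)) -
        ((w.re - z.re : ℝ) : ℂ) * f z =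
        ∫ x : ℝ in z.re..w.re, (f ((x:ℂ) + (z.im:ℂ) * I) - f z) := by
      rw [intervalIntegral.integral_sub ((contAux' f hc z.im).intervalIntegrable _ _)
        (intervalIntegrable_const), intervalIntegral.integral_const]
      simp [Complex.real_smul]
    have e2 : (∫ y : ℝ in z.im..w.im, f ((w.re:ℂ) + (y:ℂ) * I)) -
        ((w.im - z.im : ℝ) : ℂ) * f z =
        ∫ y : ℝ in z.im..w.im, (f ((w.re:ℂ) + (y:ℂ) * I) - f z) := by
      rw [intervalIntegral.integral_sub ((contAux f hc w.re).intervalIntegrable _ _)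
        (intervalIntegrable_const), intervalIntegral.integral_const]
      simp [Complex.real_smul]
    have hwz : w - z = ((w.re - z.re : ℝ) : ℂ) + ((w.im - z.im : ℝ) : ℂ) * I := by
      apply Complex.ext <;> simp
    have split : H w - H z - (w - z) • f z =
        (∫ x : ℝ in z.re..w.re, (f ((x:ℂ) + (z.im:ℂ) * I) - f z)) +
          I • ∫ y : ℝ in z.im..w.im, (f ((w.re:ℂ) + (y:ℂ) * I) - f z) := by
      rw [key z w hz hwim, smul_eq_mul, hwz, ← e1, ← e2]
      simp only [smul_eq_mul]; ring
    rw [split]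
    have b1 : ‖∫ x : ℝ in z.re..w.re, (f ((x:ℂ) + (z.im:ℂ) * I) - f z)‖ ≤
        (c/2) * |w.re - z.re| := by
      apply intervalIntegral.norm_integral_le_of_norm_le_const
      intro x hx
      have hx' : |x - z.re| ≤ |w.re - z.re| := mem_uIoc_abs hx
      have hdd : dist ((x:ℂ) + (z.im:ℂ) * I) z < r := by
        apply hdist
        have he : ((x:ℂ) + (z.im:ℂ) * I) - z = ((x - z.re : ℝ) : ℂ) := by
          apply Complex.ext <;> simp
        rw [Complex.dist_eq, he]
        rw [Complex.norm_real, Real.norm_eq_abs]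
        calc |x - z.re| ≤ |w.re - z.re| := hx'
          _ ≤ dist w z := hre
          _ ≤ 2 * dist w z := by linarith [dist_nonneg (x := w) (y := z)]
      rw [← dist_eq_norm]
      exact le_of_lt (hr hdd)
    have b2 : ‖∫ y : ℝ in z.im..w.im, (f ((w.re:ℂ) + (y:ℂ) * I) - f z)‖ ≤
        (c/2) * |w.im - z.im| := by
      apply intervalIntegral.norm_integral_le_of_norm_le_const
      intro y hy
      have hy' : |y - z.im| ≤ |w.im - z.im| := mem_uIoc_abs hy
      have hdd : dist ((w.re:ℂ) + (y:ℂ) * I) z < r := by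
        apply hdist
        have he : ((w.re:ℂ) + (y:ℂ) * I) - z = ((w.re - z.re : ℝ) : ℂ) + ((y - z.im : ℝ) : ℂ) * I := by
          apply Complex.ext <;> simp
        rw [Complex.dist_eq, he]
        calc ‖((w.re - z.re : ℝ) : ℂ) + ((y - z.im : ℝ) : ℂ) * I‖
            ≤ ‖((w.re - z.re : ℝ) : ℂ)‖ + ‖((y - z.im : ℝ) : ℂ) * I‖ :=
              norm_add_le _ _
          _ = |w.re - z.re| + |y - z.im| := by
              simp only [norm_mul, Complex.norm_I, mul_one, ← Complex.ofReal_sub,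
                Complex.norm_real, Real.norm_eq_abs]
          _ ≤ dist w z + dist w z := by
              have := le_trans hy' him
              linarith [hre]
          _ = 2 * dist w z := by ring
      rw [← dist_eq_norm]
      exact le_of_lt (hr hdd)
    have hn : ‖w - z‖ = dist w z := (dist_eq_norm w z).symm
    calc ‖(∫ x : ℝ in z.re..w.re, (f ((x:ℂ) + (z.im:ℂ) * I) - f z)) +
          I • ∫ y : ℝ in z.im..w.im, (f ((w.re:ℂ) + (y:ℂ) * I) - f z)‖
        ≤ ‖∫ x : ℝ in z.re..w.re, (f ((x:ℂ) + (z.im:ℂ) * I) - f z)‖ +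
          ‖I • ∫ y : ℝ in z.im..w.im, (f ((w.re:ℂ) + (y:ℂ) * I) - f z)‖ := norm_add_le _ _
      _ = ‖∫ x : ℝ in z.re..w.re, (f ((x:ℂ) + (z.im:ℂ) * I) - f z)‖ +
          ‖∫ y : ℝ in z.im..w.im, (f ((w.re:ℂ) + (y:ℂ) * I) - f z)‖ := by
          rw [norm_smul]; simp
      _ ≤ (c/2) * |w.re - z.re| + (c/2) * |w.im - z.im| := add_le_add b1 b2
      _ ≤ (c/2) * dist w z + (c/2) * dist w z := by
          have h1 : |w.re - z.re| ≤ dist w z := hre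
          have h2 : |w.im - z.im| ≤ dist w z := him
          have : (0:ℝ) ≤ c/2 := by linarith
          nlinarith
      _ = c * ‖w - z‖ := by rw [hn]; ring
  intro z hz
  have hslab : IsOpen {u : ℂ | |u.im - y₀| < δ} := by
    have : Continuous fun u : ℂ => |u.im - y₀| := by fun_prop
    exact isOpen_lt this continuous_const
  have hmem : {u : ℂ | |u.im - y₀| < δ} ∈ nhds z := hslab.mem_nhds hz
  have hHdiff : DifferentiableOn ℂ H {u : ℂ | |u.im - y₀| < δ} :=
    fun u hu => ((hder u hu).differentiableAt).differentiableWithinAt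
  have hHa : AnalyticAt ℂ H z := hHdiff.analyticAt hmem
  have hfd : DifferentiableAt ℂ (fun u => fderiv ℂ H u 1) z :=
    (hHa.fderiv.differentiableAt).clm_apply (differentiableAt_const 1)
  have hev : f =ᶠ[nhds z] fun u => fderiv ℂ H u 1 := by
    filter_upwards [hmem] with u hu
    have := (hder u hu).deriv
    rw [← this, ← fderiv_apply_one_eq_deriv]
  exact hfd.congr_of_eventuallyEq hev


lemma int_eq_of_abs_lt {n m : ℤ} {β : ℝ} (hβ : 0 < β) (h : |(n : ℝ) * β - m * β| < β) : n = m := by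
  by_contra hne
  have h1 : (1 : ℝ) ≤ |(n : ℝ) - m| := by
    have : (1 : ℤ) ≤ |n - m| := Int.one_le_abs (sub_ne_zero.mpr hne)
    calc (1:ℝ) = ((1:ℤ):ℝ) := by norm_num
      _ ≤ (|n - m| : ℝ) := by exact_mod_cast this
      _ = |(n : ℝ) - m| := by push_cast [Int.cast_abs]; ring_nf
  have h2 : |(n : ℝ) * β - m * β| = |(n : ℝ) - m| * β := by
    rw [← sub_mul, abs_mul, abs_of_pos hβ]
  nlinarith

lemma strip_const {β : ℝ} (hβ : 0 < β) {F : ℂ → ℂ} {C : ℝ}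
    (hC : ∀ z : ℂ, 0 ≤ z.im → z.im ≤ β → ‖F z‖ ≤ C)
    (hcont : ContinuousOn F {z : ℂ | 0 ≤ z.im ∧ z.im ≤ β})
    (hdiff : DifferentiableOn ℂ F {z : ℂ | 0 < z.im ∧ z.im < β})
    (hper : ∀ t : ℝ, F ((t : ℂ) + (β : ℂ) * I) = F (t : ℂ)) :
    ∀ t : ℝ, F (t : ℂ) = F 0 := by
  have hperC : ∀ u : ℂ, u.im = 0 → F (u + (β : ℂ) * I) = F u := by
    intro u hu
    have : u = ((u.re : ℝ) : ℂ) := by apply Complex.ext <;> simp [hu]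
    rw [this]; exact hper u.re
  -- the shift maps
  set sh : ℤ → ℂ → ℂ := fun n z => z - (n : ℂ) * ((β : ℂ) * I) with hsh
  have sh_re : ∀ (n : ℤ) (z : ℂ), (sh n z).re = z.re := by intro n z; simp [hsh]
  have sh_im : ∀ (n : ℤ) (z : ℂ), (sh n z).im = z.im - n * β := by intro n z; simp [hsh]
  set G : ℂ → ℂ := fun z => F (sh ⌊z.im / β⌋ z) with hG
  -- floor facts
  have floor_eq : ∀ (n : ℤ) (z : ℂ), (n : ℝ) * β ≤ z.im → z.im < ((n : ℝ) + 1) * β →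
      ⌊z.im / β⌋ = n := by
    intro n z h1 h2
    rw [Int.floor_eq_iff]
    constructor
    · rw [le_div_iff₀ hβ]; linarith
    · rw [div_lt_iff₀ hβ]; push_cast; linarith
  -- A: formula on half-open slabs
  have A : ∀ (n : ℤ) (z : ℂ), (n : ℝ) * β ≤ z.im → z.im < ((n : ℝ) + 1) * β →
      G z = F (sh n z) := by
    intro n z h1 h2
    rw [hG]; simp only; rw [floor_eq n z h1 h2]
  -- A'': on the line im = n β, value also given by shift n - 1
  have A'' : ∀ (n : ℤ) (z : ℂ), z.im = (n : ℝ) * β → G z = F (sh (n - 1) z) := by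
    intro n z h1
    have e0 : G z = F (sh n z) := by
      apply A n z (le_of_eq h1.symm)
      rw [h1]; nlinarith
    have e1 : sh (n - 1) z = sh n z + (β : ℂ) * I := by
      simp only [hsh]; push_cast; ring
    have e2 : (sh n z).im = 0 := by rw [sh_im, h1]; ring
    rw [e0, e1, hperC (sh n z) e2]
  -- continuity of the translates
  have contV : ∀ n : ℤ, ContinuousOn (fun z => F (sh n z))
      {z : ℂ | (n : ℝ) * β ≤ z.im ∧ z.im ≤ ((n : ℝ) + 1) * β} := by
    intro n
    apply hcont.comp
    · exact (Continuous.continuousOn (by fun_prop))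
    · intro z hz
      simp only [mem_setOf_eq] at hz ⊢
      rw [sh_im]
      constructor <;> [linarith [hz.1]; nlinarith [hz.2]]
  -- G is continuous
  have hGcont : Continuous G := by
    rw [continuous_iff_continuousAt]
    intro z
    by_cases hz : ∃ m : ℤ, z.im = (m : ℝ) * β
    · obtain ⟨m, hm⟩ := hz
      rw [← continuousWithinAt_univ]
      have hub : (univ : Set ℂ) ⊆ {w : ℂ | w.im ≤ (m : ℝ) * β} ∪ {w : ℂ | (m : ℝ) * β ≤ w.im} := by
        intro w _; rcases le_total w.im ((m : ℝ) * β) with h | h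
        · exact Or.inl h
        · exact Or.inr h
      apply ContinuousWithinAt.mono _ hub
      apply ContinuousWithinAt.union
      -- lower part
      · have hS : ContinuousWithinAt (fun w => F (sh (m - 1) w))
            {w : ℂ | ((m : ℝ) - 1) * β ≤ w.im ∧ w.im ≤ (m : ℝ) * β} z := by
          have := (contV (m - 1)).continuousWithinAt (x := z) ?_
          · convert this using 3 <;> push_cast <;> ring_nf
          · simp only [mem_setOf_eq]; push_cast; constructor <;> [nlinarith [hm]; nlinarith [hm]]
        have heq : ∀ w ∈ {w : ℂ | ((m : ℝ) - 1) * β ≤ w.im ∧ w.im ≤ (m : ℝ) * β},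
            G w = F (sh (m - 1) w) := by
          intro w hw
          rcases lt_or_eq_of_le hw.2 with h | h
          · have := A (m - 1) w (by push_cast; linarith [hw.1]) (by push_cast; linarith)
            exact this
          · exact A'' m w h
        have hSG : ContinuousWithinAt G
            {w : ℂ | ((m : ℝ) - 1) * β ≤ w.im ∧ w.im ≤ (m : ℝ) * β} z :=
          hS.congr heq (heq z ⟨by push_cast; nlinarith [hm], le_of_eq hm⟩)
        apply hSG.mono_of_mem_nhdsWithin
        rw [mem_nhdsWithin]
        refine ⟨{w : ℂ | ((m : ℝ) - 1) * β < w.im}, ?_, ?_, ?_⟩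
        · exact isOpen_lt continuous_const Complex.continuous_im
        · simp only [mem_setOf_eq]; rw [hm]; nlinarith
        · intro w hw; exact ⟨le_of_lt hw.1, hw.2⟩
      -- upper part
      · have hS : ContinuousWithinAt (fun w => F (sh m w))
            {w : ℂ | (m : ℝ) * β ≤ w.im ∧ w.im ≤ ((m : ℝ) + 1) * β} z :=
          (contV m).continuousWithinAt (by
            simp only [mem_setOf_eq]; rw [hm]; constructor <;> nlinarith)
        have heq : ∀ w ∈ {w : ℂ | (m : ℝ) * β ≤ w.im ∧ w.im ≤ ((m : ℝ) + 1) * β},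
            G w = F (sh m w) := by
          intro w hw
          rcases lt_or_eq_of_le hw.2 with h | h
          · exact A m w hw.1 h
          · have := A'' (m + 1) w (by push_cast; linarith [h])
            convert this using 3
            push_cast; ring
        have hSG : ContinuousWithinAt G
            {w : ℂ | (m : ℝ) * β ≤ w.im ∧ w.im ≤ ((m : ℝ) + 1) * β} z :=
          hS.congr heq (heq z ⟨le_of_eq hm.symm, by rw [hm]; nlinarith⟩)
        apply hSG.mono_of_mem_nhdsWithin
        rw [mem_nhdsWithin]
        refine ⟨{w : ℂ | w.im < ((m : ℝ) + 1) * β}, ?_, ?_, ?_⟩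
        · exact isOpen_lt Complex.continuous_im continuous_const
        · simp only [mem_setOf_eq]; rw [hm]; nlinarith
        · intro w hw; exact ⟨hw.2, le_of_lt hw.1⟩
    · push_neg at hz
      set n : ℤ := ⌊z.im / β⌋ with hn
      have h1 : (n : ℝ) * β ≤ z.im := by
        have := Int.sub_floor_div_mul_nonneg z.im hβ; linarith
      have h2 : z.im < ((n : ℝ) + 1) * β := by
        have := Int.sub_floor_div_mul_lt z.im hβ; nlinarith
      have h1' : (n : ℝ) * β < z.im := lt_of_le_of_ne h1 (fun h => hz n h.symm)
      have hopen : IsOpen {w : ℂ | (n : ℝ) * β < w.im ∧ w.im < ((n : ℝ) + 1) * β} :=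
        (isOpen_lt continuous_const Complex.continuous_im).inter
          (isOpen_lt Complex.continuous_im continuous_const)
      have hFat : ContinuousAt F (sh n z) := by
        apply hcont.continuousAt
        rw [_root_.mem_nhds_iff]
        refine ⟨{u : ℂ | 0 < u.im ∧ u.im < β}, ?_, ?_, ?_⟩
        · intro u hu; exact ⟨le_of_lt hu.1, le_of_lt hu.2⟩
        · exact (isOpen_lt continuous_const Complex.continuous_im).inter
            (isOpen_lt Complex.continuous_im continuous_const)
        · simp only [mem_setOf_eq]; rw [sh_im]; constructor <;> nlinarith
      have hshc : ContinuousAt (sh n) z := by fun_prop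
      have : ContinuousAt (fun w => F (sh n w)) z := hFat.comp hshc
      apply this.congr
      filter_upwards [hopen.mem_nhds ⟨h1', h2⟩] with w hw
      exact (A n w (le_of_lt hw.1) hw.2).symm
  -- differentiability off the lines
  have hGdiff : ∀ w : ℂ, (∀ m : ℤ, w.im ≠ (m : ℝ) * β) → DifferentiableAt ℂ G w := by
    intro z hz
    set n : ℤ := ⌊z.im / β⌋ with hn
    have h1 : (n : ℝ) * β ≤ z.im := by
      have := Int.sub_floor_div_mul_nonneg z.im hβ; linarith
    have h2 : z.im < ((n : ℝ) + 1) * β := by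
      have := Int.sub_floor_div_mul_lt z.im hβ; nlinarith
    have h1' : (n : ℝ) * β < z.im := lt_of_le_of_ne h1 (fun h => hz n h.symm)
    have hopen : IsOpen {w : ℂ | (n : ℝ) * β < w.im ∧ w.im < ((n : ℝ) + 1) * β} :=
      (isOpen_lt continuous_const Complex.continuous_im).inter
        (isOpen_lt Complex.continuous_im continuous_const)
    have hFat : DifferentiableAt ℂ F (sh n z) := by
      apply hdiff.differentiableAt
      rw [_root_.mem_nhds_iff]
      refine ⟨{u : ℂ | 0 < u.im ∧ u.im < β}, subset_rfl, ?_, ?_⟩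
      · exact (isOpen_lt continuous_const Complex.continuous_im).inter
          (isOpen_lt Complex.continuous_im continuous_const)
      · simp only [mem_setOf_eq]; rw [sh_im]; constructor <;> nlinarith
    have hshd : DifferentiableAt ℂ (sh n) z := by
      simp only [hsh]
      exact (differentiableAt_id.sub_const _)
    have : DifferentiableAt ℂ (fun w => F (sh n w)) z := hFat.comp z hshd
    apply this.congr_of_eventuallyEq
    filter_upwards [hopen.mem_nhds ⟨h1', h2⟩] with w hw
    exact A n w (le_of_lt hw.1) hw.2
  -- G is entire
  have hGentire : Differentiable ℂ G := by
    intro z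
    by_cases hz : ∃ m : ℤ, z.im = (m : ℝ) * β
    · obtain ⟨m, hm⟩ := hz
      apply removable_line hGcont hβ (y₀ := (m : ℝ) * β) ?_ z (by rw [hm]; simpa using hβ)
      intro u hu hune
      apply hGdiff
      intro k hk
      apply hune
      rw [hk]
      rw [hk] at hu
      rw [int_eq_of_abs_lt hβ hu]
    · push_neg at hz
      exact hGdiff z hz
  -- G is bounded
  have hGbdd : Bornology.IsBounded (Set.range G) := by
    rw [isBounded_iff_forall_norm_le]
    refine ⟨C, ?_⟩
    rintro y ⟨z, rfl⟩
    set n : ℤ := ⌊z.im / β⌋ with hn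
    have h1 := Int.sub_floor_div_mul_nonneg z.im hβ
    have h2 := Int.sub_floor_div_mul_lt z.im hβ
    apply hC
    · rw [sh_im]; linarith
    · rw [sh_im]; linarith
  -- Liouville
  intro t
  have h0 : ∀ s : ℝ, G ((s : ℝ) : ℂ) = F ((s : ℝ) : ℂ) := by
    intro s
    have him : ((s : ℝ) : ℂ).im = 0 := by simp
    have : ⌊((s : ℝ) : ℂ).im / β⌋ = 0 := by rw [him]; simp
    rw [hG]; simp only; rw [this]
    simp [hsh]
  have hL := hGentire.apply_eq_apply_of_bounded hGbdd ((t : ℝ) : ℂ) 0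
  have hz0 : ((0 : ℝ) : ℂ) = (0 : ℂ) := by norm_num
  calc F ((t : ℝ) : ℂ) = G ((t : ℝ) : ℂ) := (h0 t).symm
    _ = G 0 := hL
    _ = F 0 := by rw [← hz0, h0 0]

end KMSAux

end

/-- On a commutative unital complex *-algebra, a β-KMS state satisfies
`ω(A·α_t(B)) = ω(A·B)` for all `A`, `B` and all `t`. -/
theorem kms_state_commutative_ground
    {A : Type*} [CommRing A] [Algebra ℂ A] [StarRing A]
    (ω : A →ₗ[ℂ] ℂ)
    (hω1 : ω 1 = 1)
    (hωpos : ∀ a : A, ∃ r : ℝ, 0 ≤ r ∧ ω (star a * a) = (r : ℂ))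
    (α : ℝ → (A ≃⋆ₐ[ℂ] A))
    (hα0 : ∀ a : A, α 0 a = a)
    (hαadd : ∀ (s t : ℝ) (a : A), α (s + t) a = α s (α t a))
    (β : ℝ) (hβ : 0 < β)
    (hKMS : ∀ a b : A, ∃ F : ℂ → ℂ,
      (∃ C : ℝ, ∀ z : ℂ, 0 ≤ z.im → z.im ≤ β → ‖F z‖ ≤ C) ∧
      ContinuousOn F {z : ℂ | 0 ≤ z.im ∧ z.im ≤ β} ∧
      DifferentiableOn ℂ F {z : ℂ | 0 < z.im ∧ z.im < β} ∧
      (∀ t : ℝ, F (t : ℂ) = ω (a * α t b)) ∧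
      (∀ t : ℝ, F ((t : ℂ) + (β : ℂ) * Complex.I) = ω (α t b * a))) :
    ∀ (a b : A) (t : ℝ), ω (a * α t b) = ω (a * b) := by
  intro a b t
  obtain ⟨F, ⟨C, hC⟩, hcont, hdiff, hre, hib⟩ := hKMS a b
  have hper : ∀ s : ℝ, F ((s : ℂ) + (β : ℂ) * Complex.I) = F (s : ℂ) := by
    intro s; rw [hib s, hre s, mul_comm]
  have hmain := KMSAux.strip_const hβ hC hcont hdiff hper t
  have h0 : F 0 = ω (a * b) := by
    rw [← Complex.ofReal_zero, hre 0, hα0]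
  calc ω (a * α t b) = F (t : ℂ) := (hre t).symm
    _ = F 0 := hmain
    _ = ω (a * b) := h0
end

section
/- Let X be a compact Hausdorff topological space, let Ψ_t, t ∈ ℝ, be a one-parameter group of homeomorphisms of X (Ψ_0 = id and Ψ_{s+t} = Ψ_s ∘ Ψ_t), let X₀ := {x ∈ X : Ψ_t(x) = x for all t ∈ ℝ} be the fixed-point set, and let μ be a regular Borel probability measure on X. Then ∫_X F(x)·(G(Ψ_t(x)) − G(x)) dμ(x) = 0 for all t ∈ ℝ and all continuous functions F, G : X → ℂ if and only if the (closed) support of μ is contained in X₀. -/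
open MeasureTheory

/-- For a one-parameter group of homeomorphisms `Ψ_t` of a compact Hausdorff space `X` with
fixed-point set `X₀`, and a regular Borel probability measure `μ`, the ground-state condition
`∫ F·(G∘Ψ_t − G) dμ = 0` for all continuous `F`, `G` and all `t` holds if and only if the
support of `μ` (the set of points all of whose open neighbourhoods have positive measure) is
contained in `X₀`. -/
theorem ground_state_iff_support_in_fixed_points
    {X : Type*} [TopologicalSpace X] [CompactSpace X] [T2Space X]
    [MeasurableSpace X] [BorelSpace X]
    (Ψ : ℝ → X ≃ₜ X)
    (hΨ0 : ∀ x : X, Ψ 0 x = x)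
    (hΨadd : ∀ (s t : ℝ) (x : X), Ψ (s + t) x = Ψ s (Ψ t x))
    (μ : Measure X) [IsProbabilityMeasure μ] [μ.Regular] :
    (∀ (t : ℝ) (F G : C(X, ℂ)), ∫ x, F x * (G (Ψ t x) - G x) ∂μ = 0) ↔
      {x : X | ∀ U : Set X, IsOpen U → x ∈ U → 0 < μ U} ⊆
        {x : X | ∀ t : ℝ, Ψ t x = x} := by
  set S : Set X := {x : X | ∀ U : Set X, IsOpen U → x ∈ U → 0 < μ U} with hS
  constructor
  · -- Forward direction
    intro hint x hx t
    by_contra hne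
    -- Urysohn: a continuous real function separating x and Ψ t x
    obtain ⟨f, hf0, hf1, -⟩ := exists_continuous_zero_one_of_isClosed
      (isClosed_singleton (x := x)) (isClosed_singleton (x := Ψ t x))
      (Set.disjoint_singleton.mpr (fun h => hne h.symm))
    set G : C(X, ℂ) := ⟨fun y => (f y : ℂ), by fun_prop⟩ with hG
    set h : C(X, ℂ) := G.comp ⟨Ψ t, (Ψ t).continuous⟩ - G with hh
    have hcont : Continuous fun y => G (Ψ t y) - G y := by fun_prop
    have key : ∫ y, (starRingEnd ℂ) (h y) * (G (Ψ t y) - G y) ∂μ = 0 := by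
      have := hint t (star h) G
      simpa using this
    have hform : ∀ y, (starRingEnd ℂ) (h y) * (G (Ψ t y) - G y)
        = (Complex.normSq (h y) : ℂ) := by
      intro y
      rw [hh]
      simp only [ContinuousMap.sub_apply, ContinuousMap.comp_apply, ContinuousMap.coe_mk]
      rw [← Complex.normSq_eq_conj_mul_self]
    rw [show (fun y => (starRingEnd ℂ) (h y) * (G (Ψ t y) - G y))
        = fun y => (Complex.normSq (h y) : ℂ) from funext hform] at key
    have hcast : ∫ y, (Complex.normSq (h y) : ℂ) ∂μ
        = ((∫ y, Complex.normSq (h y) ∂μ : ℝ) : ℂ) :=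
      integral_ofReal (𝕜 := ℂ)
    rw [hcast] at key
    have hreal : ∫ y, Complex.normSq (h y) ∂μ = 0 := by
      exact_mod_cast key
    have hintg : Integrable (fun y => Complex.normSq (h y)) μ := by
      apply Continuous.integrable_of_hasCompactSupport (Complex.continuous_normSq.comp h.continuous)
      exact (isClosed_tsupport _).isCompact
    have hae : (fun y => Complex.normSq (h y)) =ᵐ[μ] 0 := by
      rw [← integral_eq_zero_iff_of_nonneg (fun y => Complex.normSq_nonneg _) hintg]
      exact hreal
    -- The open set where h ≠ 0 is a null set containing x: contradiction
    have hμN : μ {y | h y ≠ 0} = 0 := by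
      have : {y | h y ≠ 0} ⊆ {y | ¬ (fun y => Complex.normSq (h y)) y = (0 : X → ℝ) y} := by
        intro y hy
        simp only [Set.mem_setOf_eq, Pi.zero_apply, Complex.normSq_eq_zero]
        exact hy
      exact measure_mono_null this hae
    have hNopen : IsOpen {y | h y ≠ 0} := isOpen_ne_fun h.continuous continuous_const
    have hxN : x ∈ {y | h y ≠ 0} := by
      simp only [Set.mem_setOf_eq, hh, ContinuousMap.sub_apply, ContinuousMap.comp_apply,
        ContinuousMap.coe_mk, sub_ne_zero, hG]
      have h1 : f (Ψ t x) = 1 := hf1 rfl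
      have h0 : f x = 0 := hf0 rfl
      simp [h1, h0]
    have := hx _ hNopen hxN
    rw [hμN] at this
    exact lt_irrefl 0 this
  · -- Reverse direction
    intro hsub t F G
    -- The complement of S is an open null set
    have hSc_open : IsOpen Sᶜ := by
      rw [isOpen_iff_forall_mem_open]
      intro x hx
      simp only [hS, Set.mem_compl_iff, Set.mem_setOf_eq, not_forall] at hx
      obtain ⟨U, hU, hxU, hμU⟩ := hx
      refine ⟨U, fun y hy => ?_, hU, hxU⟩
      simp only [hS, Set.mem_compl_iff, Set.mem_setOf_eq, not_forall]
      exact ⟨U, hU, hy, hμU⟩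
    have hμSc : μ Sᶜ = 0 := by
      rw [hSc_open.measure_eq_iSup_isCompact]
      simp only [ENNReal.iSup_eq_zero]
      intro K hKS hK
      -- cover K by null open sets
      have hcov : ∀ x ∈ K, ∃ U : Set X, IsOpen U ∧ x ∈ U ∧ μ U = 0 := by
        intro x hxK
        have := hKS hxK
        simp only [hS, Set.mem_compl_iff, Set.mem_setOf_eq, not_forall] at this
        obtain ⟨U, hU, hxU, hμU⟩ := this
        exact ⟨U, hU, hxU, le_antisymm (not_lt.mp hμU) zero_le⟩
      choose! U hUopen hxU hμU using hcov
      obtain ⟨s, hs⟩ := hK.elim_finite_subcover (fun x : K => U x)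
        (fun x => hUopen x x.2) (fun x hxK => Set.mem_iUnion.mpr ⟨⟨x, hxK⟩, hxU x hxK⟩)
      refine le_antisymm ?_ zero_le
      calc μ K ≤ μ (⋃ i ∈ s, U i) := measure_mono hs
        _ ≤ ∑ i ∈ s, μ (U i) := measure_biUnion_finset_le s _
        _ = 0 := Finset.sum_eq_zero fun i _ => hμU i i.2
    -- a.e. every point is in S, hence fixed, hence the integrand vanishes a.e.
    have hae : ∀ᵐ x ∂μ, F x * (G (Ψ t x) - G x) = 0 := by
      have hS_ae : ∀ᵐ x ∂μ, x ∈ S := by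
        rw [ae_iff]
        exact hμSc
      filter_upwards [hS_ae] with x hxS
      rw [hsub hxS t]
      simp
    exact integral_eq_zero_of_ae hae
end

section
/- Let β > 0 and let F : ℂ → ℂ be bounded and continuous on the closed strip S̄_β = {z ∈ ℂ : 0 ≤ Im z ≤ β}, holomorphic on the open strip S_β = {z : 0 < Im z < β}, and satisfy the periodicity condition F(t + iβ) = F(t) for all t ∈ ℝ. Then F is constant on S̄_β. -/
open Complex Set Metric intervalIntegral

noncomputable def rectInt (f : ℂ → ℂ) (x₁ x₂ y₁ y₂ : ℝ) : ℂ :=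
  ((∫ x : ℝ in x₁..x₂, f (x + y₁ * I)) - ∫ x : ℝ in x₁..x₂, f (x + y₂ * I)) +
    I • (∫ y : ℝ in y₁..y₂, f (x₂ + y * I)) - I • ∫ y : ℝ in y₁..y₂, f (x₁ + y * I)

lemma rectInt_eq_zero (f : ℂ → ℂ) (x₁ x₂ y₁ y₂ : ℝ)
    (Hc : ContinuousOn f (uIcc x₁ x₂ ×ℂ uIcc y₁ y₂))
    (Hd : DifferentiableOn ℂ f (Ioo (min x₁ x₂) (max x₁ x₂) ×ℂ Ioo (min y₁ y₂) (max y₁ y₂))) :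
    rectInt f x₁ x₂ y₁ y₂ = 0 := by
  have h := Complex.integral_boundary_rect_eq_zero_of_continuousOn_of_differentiableOn f
    ⟨x₁, y₁⟩ ⟨x₂, y₂⟩ (by simpa using Hc) (by simpa using Hd)
  simpa [rectInt] using h

lemma abs_sub_le_of_mem_uIcc {a b s t : ℝ} (h : t ∈ uIcc a b) :
    |t - s| ≤ max |a - s| |b - s| := by
  have h' : a ⊓ b ≤ t ∧ t ≤ a ⊔ b := Set.mem_Icc.1 h
  rw [abs_sub_le_iff]
  constructor
  · calc t - s ≤ a ⊔ b - s := by linarith [h'.2]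
      _ = max (a - s) (b - s) := (max_sub_sub_right a b s).symm
      _ ≤ max |a - s| |b - s| := max_le_max (le_abs_self _) (le_abs_self _)
  · calc s - t ≤ s - a ⊓ b := by linarith [h'.1]
      _ = max (s - a) (s - b) := by rw [sub_inf]
      _ ≤ max |a - s| |b - s| := max_le_max (by rw [abs_sub_comm]; exact le_abs_self _)
          (by rw [abs_sub_comm]; exact le_abs_self _)

lemma rect_subset_ball {c : ℂ} {r a b p q : ℝ}
    (h : max |a - c.re| |b - c.re| + max |p - c.im| |q - c.im| < r) :
    uIcc a b ×ℂ uIcc p q ⊆ ball c r := by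
  intro w hw
  rw [Complex.mem_reProdIm] at hw
  rw [mem_ball, Complex.dist_eq]
  calc ‖w - c‖ ≤ |(w - c).re| + |(w - c).im| := Complex.norm_le_abs_re_add_abs_im _
    _ = |w.re - c.re| + |w.im - c.im| := by simp [Complex.sub_re, Complex.sub_im]
    _ ≤ max |a - c.re| |b - c.re| + max |p - c.im| |q - c.im| :=
        add_le_add (abs_sub_le_of_mem_uIcc hw.1) (abs_sub_le_of_mem_uIcc hw.2)
    _ < r := h

lemma rectInt_split (f : ℂ → ℂ) (x₁ x₂ y₁ m y₂ : ℝ)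
    (h₂ : IntervalIntegrable (fun y : ℝ => f (x₂ + y * I)) MeasureTheory.volume y₁ m)
    (h₂' : IntervalIntegrable (fun y : ℝ => f (x₂ + y * I)) MeasureTheory.volume m y₂)
    (h₁ : IntervalIntegrable (fun y : ℝ => f (x₁ + y * I)) MeasureTheory.volume y₁ m)
    (h₁' : IntervalIntegrable (fun y : ℝ => f (x₁ + y * I)) MeasureTheory.volume m y₂) :
    rectInt f x₁ x₂ y₁ y₂ = rectInt f x₁ x₂ y₁ m + rectInt f x₁ x₂ m y₂ := by
  unfold rectInt
  rw [← integral_add_adjacent_intervals h₂ h₂', ← integral_add_adjacent_intervals h₁ h₁']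
  simp only [smul_eq_mul]; ring

lemma not_mem_Ioo_minmax (a m : ℝ) : m ∉ Ioo (min a m) (max a m) := by
  intro h
  rcases min_lt_iff.1 h.1 with h1 | h1 <;> rcases lt_max_iff.1 h.2 with h2 | h2 <;> linarith

lemma not_mem_Ioo_minmax' (a m : ℝ) : m ∉ Ioo (min m a) (max m a) := by
  intro h
  rcases min_lt_iff.1 h.1 with h1 | h1 <;> rcases lt_max_iff.1 h.2 with h2 | h2 <;> linarith

lemma edge_line (f : ℂ → ℂ) (m : ℝ) (c : ℂ) (r : ℝ) (hr : 0 < r)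
    (hc : ContinuousOn f (ball c r))
    (hd : ∀ z ∈ ball c r, z.im ≠ m → DifferentiableAt ℂ f z) :
    DifferentiableAt ℂ f c := by
  -- integrability of integrands over segments inside the ball
  have integ_h : ∀ a b y : ℝ, uIcc a b ×ℂ uIcc y y ⊆ ball c r →
      IntervalIntegrable (fun x : ℝ => f (x + y * I)) MeasureTheory.volume a b := by
    intro a b y h
    apply ContinuousOn.intervalIntegrable
    apply hc.comp (Continuous.continuousOn (by continuity))
    intro x hx
    exact h (by rw [Complex.mem_reProdIm]; simp [hx])
  have integ_v : ∀ x p q : ℝ, uIcc x x ×ℂ uIcc p q ⊆ ball c r →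
      IntervalIntegrable (fun y : ℝ => f (x + y * I)) MeasureTheory.volume p q := by
    intro x p q h
    apply ContinuousOn.intervalIntegrable
    apply hc.comp (Continuous.continuousOn (by continuity))
    intro y hy
    exact h (by rw [Complex.mem_reProdIm]; simp [hy])
  -- all rectangle integrals inside the ball vanish
  have key : ∀ x₁ x₂ y₁ y₂ : ℝ, uIcc x₁ x₂ ×ℂ uIcc y₁ y₂ ⊆ ball c r →
      rectInt f x₁ x₂ y₁ y₂ = 0 := by
    intro x₁ x₂ y₁ y₂ hsub
    have base : ∀ p q : ℝ, uIcc p q ⊆ uIcc y₁ y₂ → m ∉ Ioo (min p q) (max p q) →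
        rectInt f x₁ x₂ p q = 0 := by
      intro p q hpq hm
      have hsub' : uIcc x₁ x₂ ×ℂ uIcc p q ⊆ ball c r := by
        refine subset_trans ?_ hsub
        intro w hw
        rw [Complex.mem_reProdIm] at hw ⊢
        exact ⟨hw.1, hpq hw.2⟩
      apply rectInt_eq_zero f x₁ x₂ p q (hc.mono hsub')
      intro w hw
      rw [Complex.mem_reProdIm] at hw
      have hwball : w ∈ ball c r := hsub' (by
        rw [Complex.mem_reProdIm]
        exact ⟨Ioo_subset_Icc_self hw.1, Ioo_subset_Icc_self hw.2⟩)
      have : w.im ≠ m := fun hwm => hm (hwm ▸ hw.2)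
      exact (hd w hwball this).differentiableWithinAt
    by_cases hm : m ∈ Ioo (min y₁ y₂) (max y₁ y₂)
    · have hmy : m ∈ uIcc y₁ y₂ := Ioo_subset_Icc_self hm
      have hsplit := rectInt_split f x₁ x₂ y₁ m y₂
        (integ_v x₂ y₁ m (fun w hw => hsub (by
          rw [Complex.mem_reProdIm] at hw ⊢
          exact ⟨by rw [show w.re = x₂ from by simpa using hw.1]; exact right_mem_uIcc,
            uIcc_subset_uIcc left_mem_uIcc hmy hw.2⟩)))
        (integ_v x₂ m y₂ (fun w hw => hsub (by
          rw [Complex.mem_reProdIm] at hw ⊢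
          exact ⟨by rw [show w.re = x₂ from by simpa using hw.1]; exact right_mem_uIcc,
            uIcc_subset_uIcc hmy right_mem_uIcc hw.2⟩)))
        (integ_v x₁ y₁ m (fun w hw => hsub (by
          rw [Complex.mem_reProdIm] at hw ⊢
          exact ⟨by rw [show w.re = x₁ from by simpa using hw.1]; exact left_mem_uIcc,
            uIcc_subset_uIcc left_mem_uIcc hmy hw.2⟩)))
        (integ_v x₁ m y₂ (fun w hw => hsub (by
          rw [Complex.mem_reProdIm] at hw ⊢
          exact ⟨by rw [show w.re = x₁ from by simpa using hw.1]; exact left_mem_uIcc,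
            uIcc_subset_uIcc hmy right_mem_uIcc hw.2⟩)))
      rw [hsplit]
      rw [base y₁ m (uIcc_subset_uIcc left_mem_uIcc hmy) (not_mem_Ioo_minmax y₁ m),
        base m y₂ (uIcc_subset_uIcc hmy right_mem_uIcc) (not_mem_Ioo_minmax' y₂ m),
        add_zero]
    · exact base y₁ y₂ subset_rfl hm
  -- the primitive of f along L-shaped paths from c
  set R := r / 4 with hR
  have hRpos : 0 < R := by positivity
  have hRr : R < r := by rw [hR]; linarith
  set g : ℂ → ℂ := fun z => (∫ x : ℝ in c.re..z.re, f (x + c.im * I)) +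
    I • ∫ y : ℝ in c.im..z.im, f (z.re + y * I) with hgdef
  have habs_re : ∀ w : ℂ, |w.re - c.re| ≤ ‖w - c‖ := by
    intro w
    simpa [Complex.sub_re] using Complex.abs_re_le_norm (w - c)
  have habs_im : ∀ w : ℂ, |w.im - c.im| ≤ ‖w - c‖ := by
    intro w
    simpa [Complex.sub_im] using Complex.abs_im_le_norm (w - c)
  have subs : ∀ a b p q : ℝ, |a - c.re| < 2*R → |b - c.re| < 2*R →
      |p - c.im| < 2*R → |q - c.im| < 2*R → uIcc a b ×ℂ uIcc p q ⊆ ball c r := by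
    intro a b p q h1 h2 h3 h4
    refine rect_subset_ball ?_
    have m1 := max_lt h1 h2
    have m2 := max_lt h3 h4
    rw [hR] at m1 m2
    linarith
  have hg : ∀ z₀ ∈ ball c R, HasDerivAt g (f z₀) z₀ := by
    intro z₀ hz₀
    have hz₀' : ‖z₀ - c‖ < R := by rwa [mem_ball, Complex.dist_eq] at hz₀
    have hz₀re : |z₀.re - c.re| < R := lt_of_le_of_lt (habs_re z₀) hz₀'
    have hz₀im : |z₀.im - c.im| < R := lt_of_le_of_lt (habs_im z₀) hz₀'
    -- second path identity
    have hid : ∀ z : ℂ, ‖z - z₀‖ < R → g z - g z₀ =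
        (∫ x : ℝ in z₀.re..z.re, f (x + z₀.im * I)) +
          I • ∫ y : ℝ in z₀.im..z.im, f (z.re + y * I) := by
      intro z hz
      have hzre : |z.re - z₀.re| ≤ ‖z - z₀‖ := by
        simpa [Complex.sub_re] using Complex.abs_re_le_norm (z - z₀)
      have hzim : |z.im - z₀.im| ≤ ‖z - z₀‖ := by
        simpa [Complex.sub_im] using Complex.abs_im_le_norm (z - z₀)
      have hzre' : |z.re - c.re| < 2 * R := by
        have := abs_sub_le z.re z₀.re c.re; linarith [hz.trans_le' hzre]
      have hzim' : |z.im - c.im| < 2 * R := by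
        have := abs_sub_le z.im z₀.im c.im; linarith [hz.trans_le' hzim]
      have b0re : |c.re - c.re| < 2*R := by simpa using by positivity
      have b0im : |c.im - c.im| < 2*R := by simpa using by positivity
      have bzre : |z.re - c.re| < 2*R := hzre'
      have bzim : |z.im - c.im| < 2*R := hzim'
      have bz0re : |z₀.re - c.re| < 2*R := by linarith
      have bz0im : |z₀.im - c.im| < 2*R := by linarith
      -- integrability facts
      have i1 : IntervalIntegrable (fun x : ℝ => f (x + c.im * I)) MeasureTheory.volume c.re z.re :=
        integ_h _ _ _ (subs _ _ _ _ b0re bzre b0im b0im)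
      have i2 : IntervalIntegrable (fun x : ℝ => f (x + c.im * I)) MeasureTheory.volume c.re z₀.re :=
        integ_h _ _ _ (subs _ _ _ _ b0re bz0re b0im b0im)
      have i3 : IntervalIntegrable (fun y : ℝ => f (z.re + y * I)) MeasureTheory.volume c.im z₀.im :=
        integ_v _ _ _ (subs _ _ _ _ bzre bzre b0im bz0im)
      have i4 : IntervalIntegrable (fun y : ℝ => f (z.re + y * I)) MeasureTheory.volume z₀.im z.im :=
        integ_v _ _ _ (subs _ _ _ _ bzre bzre bz0im bzim)
      have e1 := intervalIntegral.integral_interval_sub_left i1 i2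
      have e2 := intervalIntegral.integral_add_adjacent_intervals i3 i4
      have hrect : rectInt f z₀.re z.re c.im z₀.im = 0 :=
        key _ _ _ _ (subs _ _ _ _ bz0re bzre b0im bz0im)
      unfold rectInt at hrect
      simp only [hgdef, smul_eq_mul]
      simp only [smul_eq_mul] at hrect
      linear_combination e1 + hrect - I * e2
    -- derivative estimate
    rw [hasDerivAt_iff_isLittleO, Asymptotics.isLittleO_iff]
    intro ε hε
    have hfc : ContinuousAt f z₀ :=
      hc.continuousAt (isOpen_ball.mem_nhds (ball_subset_ball hRr.le hz₀))
    obtain ⟨δ, hδpos, hδ⟩ := Metric.continuousAt_iff.1 hfc (ε/2) (by positivity)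
    have hρpos : 0 < min (δ/2) R := lt_min (by positivity) hRpos
    filter_upwards [ball_mem_nhds z₀ hρpos] with z hz
    have hzz₀ : ‖z - z₀‖ < min (δ/2) R := by
      rwa [mem_ball, Complex.dist_eq] at hz
    have h1 : ‖z - z₀‖ < R := hzz₀.trans_le (min_le_right _ _)
    have h2 : ‖z - z₀‖ < δ/2 := hzz₀.trans_le (min_le_left _ _)
    have hzre : |z.re - z₀.re| ≤ ‖z - z₀‖ := by
      simpa [Complex.sub_re] using Complex.abs_re_le_norm (z - z₀)
    have hzim : |z.im - z₀.im| ≤ ‖z - z₀‖ := by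
      simpa [Complex.sub_im] using Complex.abs_im_le_norm (z - z₀)
    have bzre : |z.re - c.re| < 2*R := by
      have := abs_sub_le z.re z₀.re c.re; linarith [h1.trans_le' hzre]
    have bzim : |z.im - c.im| < 2*R := by
      have := abs_sub_le z.im z₀.im c.im; linarith [h1.trans_le' hzim]
    have bz0re : |z₀.re - c.re| < 2*R := by linarith
    have bz0im : |z₀.im - c.im| < 2*R := by linarith
    have i5 : IntervalIntegrable (fun x : ℝ => f (x + z₀.im * I)) MeasureTheory.volume z₀.re z.re :=
      integ_h _ _ _ (subs _ _ _ _ bz0re bzre bz0im bz0im)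
    have i6 : IntervalIntegrable (fun y : ℝ => f (z.re + y * I)) MeasureTheory.volume z₀.im z.im :=
      integ_v _ _ _ (subs _ _ _ _ bzre bzre bz0im bzim)
    have hzdecomp : (z - z₀) = ((z.re - z₀.re : ℝ) : ℂ) + ((z.im - z₀.im : ℝ) : ℂ) * I := by
      simp [Complex.ext_iff]
    have key2 : g z - g z₀ - (z - z₀) • f z₀ =
        (∫ x : ℝ in z₀.re..z.re, (f (x + z₀.im * I) - f z₀)) +
          I • ∫ y : ℝ in z₀.im..z.im, (f (z.re + y * I) - f z₀) := by
      rw [hid z h1, intervalIntegral.integral_sub i5 intervalIntegrable_const,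
        intervalIntegral.integral_sub i6 intervalIntegrable_const,
        intervalIntegral.integral_const, intervalIntegral.integral_const]
      simp only [smul_eq_mul, Complex.real_smul, Complex.ofReal_sub]
      push_cast at hzdecomp ⊢
      linear_combination (-(f z₀)) * hzdecomp
    rw [key2]
    have bA : ‖∫ x : ℝ in z₀.re..z.re, (f (x + z₀.im * I) - f z₀)‖ ≤ ε/2 * |z.re - z₀.re| := by
      apply intervalIntegral.norm_integral_le_of_norm_le_const
      intro x hx
      have hx' : |x - z₀.re| ≤ |z.re - z₀.re| := by
        have := abs_sub_le_of_mem_uIcc (s := z₀.re) (uIoc_subset_uIcc hx)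
        simpa using this
      have hdist : dist ((x : ℂ) + z₀.im * I) z₀ < δ := by
        rw [Complex.dist_eq]
        calc ‖(x : ℂ) + z₀.im * I - z₀‖
            ≤ |((x : ℂ) + z₀.im * I - z₀).re| + |((x : ℂ) + z₀.im * I - z₀).im| :=
              Complex.norm_le_abs_re_add_abs_im _
          _ = |x - z₀.re| := by simp [Complex.sub_re, Complex.sub_im]
          _ < δ := by linarith [hzre.trans h2.le]
      have := hδ hdist
      rw [dist_eq_norm] at this
      exact this.le
    have bB : ‖∫ y : ℝ in z₀.im..z.im, (f (z.re + y * I) - f z₀)‖ ≤ ε/2 * |z.im - z₀.im| := by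
      apply intervalIntegral.norm_integral_le_of_norm_le_const
      intro y hy
      have hy' : |y - z₀.im| ≤ |z.im - z₀.im| := by
        have := abs_sub_le_of_mem_uIcc (s := z₀.im) (uIoc_subset_uIcc hy)
        simpa using this
      have hdist : dist ((z.re : ℂ) + y * I) z₀ < δ := by
        rw [Complex.dist_eq]
        calc ‖(z.re : ℂ) + y * I - z₀‖
            ≤ |((z.re : ℂ) + y * I - z₀).re| + |((z.re : ℂ) + y * I - z₀).im| :=
              Complex.norm_le_abs_re_add_abs_im _
          _ = |z.re - z₀.re| + |y - z₀.im| := by simp [Complex.sub_re, Complex.sub_im]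
          _ < δ := by linarith [hzre.trans h2.le, hy'.trans (hzim.trans h2.le)]
      have := hδ hdist
      rw [dist_eq_norm] at this
      exact this.le
    have hnorm : ‖z - z₀‖ = ‖z - z₀‖ := rfl
    calc ‖(∫ x : ℝ in z₀.re..z.re, (f (x + z₀.im * I) - f z₀)) +
          I • ∫ y : ℝ in z₀.im..z.im, (f (z.re + y * I) - f z₀)‖
        ≤ ‖∫ x : ℝ in z₀.re..z.re, (f (x + z₀.im * I) - f z₀)‖ +
          ‖I • ∫ y : ℝ in z₀.im..z.im, (f (z.re + y * I) - f z₀)‖ := norm_add_le _ _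
      _ = ‖∫ x : ℝ in z₀.re..z.re, (f (x + z₀.im * I) - f z₀)‖ +
          ‖∫ y : ℝ in z₀.im..z.im, (f (z.re + y * I) - f z₀)‖ := by
            rw [norm_smul]; simp
      _ ≤ ε/2 * |z.re - z₀.re| + ε/2 * |z.im - z₀.im| := add_le_add bA bB
      _ ≤ ε/2 * ‖z - z₀‖ + ε/2 * ‖z - z₀‖ := by
            rw [hnorm]
            exact add_le_add (mul_le_mul_of_nonneg_left hzre (by positivity))
              (mul_le_mul_of_nonneg_left hzim (by positivity))
      _ = ε * ‖z - z₀‖ := by ring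
  -- conclude
  have hgd : DifferentiableOn ℂ g (ball c R) :=
    fun z hz => (hg z hz).differentiableAt.differentiableWithinAt
  have hga : AnalyticOnNhd ℂ g (ball c R) := hgd.analyticOnNhd isOpen_ball
  have hderiv : AnalyticOnNhd ℂ (deriv g) (ball c R) := hga.deriv
  have hdc : DifferentiableAt ℂ (deriv g) c := (hderiv c (mem_ball_self hRpos)).differentiableAt
  have heq : f =ᶠ[nhds c] deriv g := by
    filter_upwards [isOpen_ball.mem_nhds (mem_ball_self hRpos)] with z hz
    exact ((hg z hz).deriv).symm
  exact hdc.congr_of_eventuallyEq heq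


/-- A function bounded and continuous on the closed strip `0 ≤ Im z ≤ β`, holomorphic on the
open strip, and periodic on the boundary (`F(t + iβ) = F(t)` for real `t`) is constant on the
closed strip. -/
theorem strip_periodic_boundary_constant (β : ℝ) (hβ : 0 < β) (F : ℂ → ℂ)
    (hbdd : ∃ C : ℝ, ∀ z : ℂ, 0 ≤ z.im → z.im ≤ β → ‖F z‖ ≤ C)
    (hcont : ContinuousOn F {z : ℂ | 0 ≤ z.im ∧ z.im ≤ β})
    (hholo : DifferentiableOn ℂ F {z : ℂ | 0 < z.im ∧ z.im < β})
    (hper : ∀ t : ℝ, F ((t : ℂ) + (β : ℂ) * Complex.I) = F (t : ℂ)) :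
    ∃ c : ℂ, ∀ z : ℂ, 0 ≤ z.im → z.im ≤ β → F z = c := by
  obtain ⟨C, hC⟩ := hbdd
  set G : ℂ → ℂ := fun z => F ((z.re : ℂ) + ((β * Int.fract (z.im / β) : ℝ) : ℂ) * I) with hGdef
  have hβ' : (β : ℝ) ≠ 0 := hβ.ne'
  -- G agrees with a translate of F on each closed strip
  have hagree : ∀ (k : ℤ) (z : ℂ), (k : ℝ) * β ≤ z.im → z.im ≤ ((k : ℝ) + 1) * β →
      G z = F (z - (k : ℂ) * (β : ℂ) * I) := by
    intro k z hk1 hk2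
    rcases lt_or_eq_of_le hk2 with h | h
    · have hfl : ⌊z.im / β⌋ = k := by
        rw [Int.floor_eq_iff]
        constructor
        · rwa [le_div_iff₀ hβ]
        · rw [div_lt_iff₀ hβ]; push_cast; linarith
      have hfr : Int.fract (z.im / β) = z.im / β - k := by rw [Int.fract, hfl]
      have harg : ((z.re : ℂ) + ((β * Int.fract (z.im / β) : ℝ) : ℂ) * I)
          = z - (k : ℂ) * (β : ℂ) * I := by
        apply Complex.ext
        · simp
        · simp [hfr]; field_simp
      show F ((z.re : ℂ) + ((β * Int.fract (z.im / β) : ℝ) : ℂ) * I) = _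
      rw [harg]
    · have hfr : Int.fract (z.im / β) = 0 := by
        have : z.im / β = ((k + 1 : ℤ) : ℝ) := by
          rw [h]; push_cast; field_simp
        rw [this, Int.fract_intCast]
      have h1 : G z = F ((z.re : ℂ)) := by
        rw [hGdef]; simp [hfr]
      have h2 : z - (k : ℂ) * (β : ℂ) * I = (z.re : ℂ) + (β : ℂ) * I := by
        apply Complex.ext
        · simp
        · simp [h]; ring
      rw [h1, h2, hper z.re]
  -- G is bounded by C
  have hGim : ∀ z : ℂ, ((z.re : ℂ) + ((β * Int.fract (z.im / β) : ℝ) : ℂ) * I).im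
      = β * Int.fract (z.im / β) := by intro z; simp
  have hGbdd : ∀ z : ℂ, ‖G z‖ ≤ C := by
    intro z
    apply hC
    · rw [hGim]; exact mul_nonneg hβ.le (Int.fract_nonneg _)
    · rw [hGim]
      calc β * Int.fract (z.im / β) ≤ β * 1 :=
            mul_le_mul_of_nonneg_left (Int.fract_lt_one _).le hβ.le
        _ = β := mul_one β
  -- closed strips
  have hstrip_closed : ∀ k : ℤ, IsClosed {w : ℂ | (k : ℝ) * β ≤ w.im ∧ w.im ≤ ((k : ℝ) + 1) * β} :=
    fun k => (isClosed_le continuous_const Complex.continuous_im).inter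
      (isClosed_le Complex.continuous_im continuous_const)
  -- continuity of translates of F on strips
  have htrans : ∀ k : ℤ, ContinuousOn (fun w => F (w - (k : ℂ) * (β : ℂ) * I))
      {w : ℂ | (k : ℝ) * β ≤ w.im ∧ w.im ≤ ((k : ℝ) + 1) * β} := by
    intro k
    apply hcont.comp (Continuous.continuousOn (by continuity))
    intro w hw
    constructor
    · simp only [Complex.sub_im, Complex.mul_im]
      simp
      linarith [hw.1]
    · simp only [Complex.sub_im]
      simp
      linarith [hw.2]
  -- G is continuous
  have hGcont : Continuous G := by
    rw [continuous_iff_continuousAt]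
    intro z₀
    set k : ℤ := ⌊z₀.im / β⌋ with hk
    have hk1 : (k : ℝ) * β ≤ z₀.im := by
      rw [← le_div_iff₀ hβ]; exact Int.floor_le _
    have hk2 : z₀.im < ((k : ℝ) + 1) * β := by
      rw [← div_lt_iff₀ hβ]
      have h := Int.lt_floor_add_one (z₀.im / β)
      rw [← hk] at h
      exact h
    have hcw : ∀ j : ℤ, ContinuousWithinAt G
        {w : ℂ | (j : ℝ) * β ≤ w.im ∧ w.im ≤ ((j : ℝ) + 1) * β} z₀ := by
      intro j
      by_cases hz : z₀ ∈ {w : ℂ | (j : ℝ) * β ≤ w.im ∧ w.im ≤ ((j : ℝ) + 1) * β}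
      · exact (((htrans j).continuousWithinAt hz).congr
          (fun w hw => hagree j w hw.1 hw.2) (hagree j z₀ hz.1 hz.2))
      · exact continuousWithinAt_of_notMem_closure
          (by rwa [(hstrip_closed j).closure_eq])
    have hunion := (hcw (k - 1)).union (hcw k)
    apply hunion.continuousAt
    have hopen : IsOpen {w : ℂ | ((k : ℝ) - 1) * β < w.im ∧ w.im < ((k : ℝ) + 1) * β} :=
      (isOpen_lt continuous_const Complex.continuous_im).inter
        (isOpen_lt Complex.continuous_im continuous_const)
    apply Filter.mem_of_superset (hopen.mem_nhds ⟨by nlinarith, hk2⟩)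
    intro w hw
    rcases le_or_gt w.im ((k : ℝ) * β) with h | h
    · left
      refine ⟨by push_cast; linarith [hw.1], by push_cast; linarith⟩
    · right
      exact ⟨h.le, hw.2.le⟩
  -- G is differentiable away from the lines
  have hGoff : ∀ z₀ : ℂ, (∀ j : ℤ, z₀.im ≠ (j : ℝ) * β) → DifferentiableAt ℂ G z₀ := by
    intro z₀ hne
    set k : ℤ := ⌊z₀.im / β⌋ with hk
    have hk1 : (k : ℝ) * β ≤ z₀.im := by
      rw [← le_div_iff₀ hβ]; exact Int.floor_le _
    have hk1' : (k : ℝ) * β < z₀.im := lt_of_le_of_ne hk1 (Ne.symm (hne k))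
    have hk2 : z₀.im < ((k : ℝ) + 1) * β := by
      rw [← div_lt_iff₀ hβ]
      have h := Int.lt_floor_add_one (z₀.im / β)
      rw [← hk] at h
      exact h
    have hopen : IsOpen {w : ℂ | (k : ℝ) * β < w.im ∧ w.im < ((k : ℝ) + 1) * β} :=
      (isOpen_lt continuous_const Complex.continuous_im).inter
        (isOpen_lt Complex.continuous_im continuous_const)
    have hbase : DifferentiableAt ℂ (fun w => F (w - (k : ℂ) * (β : ℂ) * I)) z₀ := by
      have hFat : DifferentiableAt ℂ F (z₀ - (k : ℂ) * (β : ℂ) * I) := by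
        apply hholo.differentiableAt
        apply ((isOpen_lt continuous_const Complex.continuous_im).inter
          (isOpen_lt Complex.continuous_im continuous_const)).mem_nhds
        have him : (z₀ - (k : ℂ) * (β : ℂ) * I).im = z₀.im - (k : ℝ) * β := by simp
        constructor
        · show 0 < (z₀ - (k : ℂ) * (β : ℂ) * I).im
          rw [him]; linarith
        · show (z₀ - (k : ℂ) * (β : ℂ) * I).im < β
          rw [him]; linarith
      exact hFat.comp z₀ (differentiableAt_id.sub_const _)
    apply hbase.congr_of_eventuallyEq
    apply Filter.eventuallyEq_of_mem (hopen.mem_nhds ⟨hk1', hk2⟩)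
    intro w hw
    exact hagree k w hw.1.le hw.2.le
  -- G is entire
  have hGdiff : Differentiable ℂ G := by
    intro z₀
    by_cases h : ∀ j : ℤ, z₀.im ≠ (j : ℝ) * β
    · exact hGoff z₀ h
    · push_neg at h
      obtain ⟨k, hkeq⟩ := h
      apply edge_line G ((k : ℝ) * β) z₀ β hβ hGcont.continuousOn
      intro w hw hwim
      apply hGoff
      intro j hj
      have hd : |w.im - z₀.im| < β := by
        refine lt_of_le_of_lt ?_ (by rwa [mem_ball, Complex.dist_eq] at hw)
        simpa [Complex.sub_im] using Complex.abs_im_le_norm (w - z₀)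
      rw [hj, hkeq, ← sub_mul, abs_mul, abs_of_pos hβ] at hd
      have habs : |(j : ℝ) - k| < 1 := by nlinarith [abs_nonneg ((j : ℝ) - (k : ℝ))]
      have hjk : j = k := by
        have h' : |j - k| < (1 : ℤ) := by
          rw [show ((j : ℝ) - k) = ((j - k : ℤ) : ℝ) by push_cast; ring, ← Int.cast_abs] at habs
          exact_mod_cast habs
        have h2 := abs_lt.1 h'
        omega
      exact hwim (by rw [hj, hjk])
  -- Liouville
  have hbound : Bornology.IsBounded (Set.range G) := by
    rw [isBounded_iff_forall_norm_le]
    exact ⟨C, by rintro _ ⟨z, rfl⟩; exact hGbdd z⟩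
  refine ⟨G 0, fun z h0 h1 => ?_⟩
  have hFz : F z = G z := by
    have := hagree 0 z (by simpa using h0) (by simpa using h1)
    simpa using this.symm
  rw [hFz]
  exact hGdiff.apply_eq_apply_of_bounded hbound z 0
end

section
/- Let F₊ : ℂ → ℂ be bounded and continuous on the closed upper half-plane {z : Im z ≥ 0} and holomorphic on the open upper half-plane {z : Im z > 0}, and let F₋ : ℂ → ℂ be bounded and continuous on the closed lower half-plane {z : Im z ≤ 0} and holomorphic on the open lower half-plane {z : Im z < 0}. If F₊(t) = F₋(t) for all t ∈ ℝ, then there is a constant c ∈ ℂ such that F₊ = c on the closed upper half-plane and F₋ = c on the closed lower half-plane; in particular F₊(t) = F₊(0) for all t ∈ ℝ. -/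
open Complex Set intervalIntegral MeasureTheory Asymptotics

-- Step 1: the glued function is entire.
lemma glue_differentiable (Fp Fm : ℂ → ℂ)
    (hpcont : ContinuousOn Fp {z : ℂ | 0 ≤ z.im})
    (hpholo : DifferentiableOn ℂ Fp {z : ℂ | 0 < z.im})
    (hmcont : ContinuousOn Fm {z : ℂ | z.im ≤ 0})
    (hmholo : DifferentiableOn ℂ Fm {z : ℂ | z.im < 0})
    (hagree : ∀ t : ℝ, Fp (t : ℂ) = Fm (t : ℂ)) :
    Differentiable ℂ (fun z : ℂ => if 0 ≤ z.im then Fp z else Fm z) := by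
  set G : ℂ → ℂ := fun z => if 0 ≤ z.im then Fp z else Fm z with hGdef
  have hGp : ∀ z : ℂ, 0 ≤ z.im → G z = Fp z := fun z hz => if_pos hz
  have hGm : ∀ z : ℂ, z.im ≤ 0 → G z = Fm z := by
    intro z hz
    by_cases h : 0 ≤ z.im
    · have hz0 : z.im = 0 := le_antisymm hz h
      have hzr : z = (z.re : ℂ) := by
        apply Complex.ext <;> simp [hz0]
      simp only [hGdef, if_pos h]
      rw [hzr, hagree]
    · exact if_neg h
  have hclU : IsClosed {z : ℂ | 0 ≤ z.im} := isClosed_le continuous_const Complex.continuous_im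
  have hclL : IsClosed {z : ℂ | z.im ≤ 0} := isClosed_le Complex.continuous_im continuous_const
  have hGcont : Continuous G := by
    rw [continuous_iff_continuousAt]
    intro z
    have h1 : ContinuousWithinAt G {z : ℂ | 0 ≤ z.im} z := by
      rcases le_or_gt 0 z.im with h | h
      · exact ((hpcont z h).congr (fun w hw => hGp w hw) (hGp z h))
      · apply continuousWithinAt_of_notMem_closure
        rw [hclU.closure_eq]
        simpa using not_le.2 h
    have h2 : ContinuousWithinAt G {z : ℂ | z.im ≤ 0} z := by
      rcases le_or_gt z.im 0 with h | h
      · exact ((hmcont z h).congr (fun w hw => hGm w hw) (hGm z h))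
      · apply continuousWithinAt_of_notMem_closure
        rw [hclL.closure_eq]
        simpa using not_le.2 h
    have h3 := h1.union h2
    have huniv : {z : ℂ | 0 ≤ z.im} ∪ {z : ℂ | z.im ≤ 0} = univ := by
      ext w; simp [le_total]
    rw [huniv, continuousWithinAt_univ] at h3
    exact h3
  -- interval integrability helpers
  have hintV : ∀ (r c d : ℝ), IntervalIntegrable (fun y : ℝ => G (r + y * I)) volume c d := by
    intro r c d
    exact (hGcont.comp (by continuity)).intervalIntegrable c d
  have hintH : ∀ (c a b : ℝ), IntervalIntegrable (fun x : ℝ => G (x + c * I)) volume a b := by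
    intro c a b
    exact (hGcont.comp (by continuity)).intervalIntegrable a b
  -- rectangle integral vanishes for rectangles in one closed half-plane
  have hrectU : ∀ a b c d : ℝ, 0 ≤ c → 0 ≤ d →
      (∫ x in a..b, G (x + c * I)) - (∫ x in a..b, G (x + d * I)) +
        I * (∫ y in c..d, G (b + y * I)) - I * (∫ y in c..d, G (a + y * I)) = 0 := by
    intro a b c d hc hd
    have := Complex.integral_boundary_rect_eq_zero_of_continuousOn_of_differentiableOn G
      (a + c * I) (b + d * I) (hGcont.continuousOn)
      (by
        have hsub : (Ioo ((↑a + ↑c * I).re ⊓ (↑b + ↑d * I).re) ((↑a + ↑c * I).re ⊔ (↑b + ↑d * I).re) ×ℂ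
            Ioo ((↑a + ↑c * I).im ⊓ (↑b + ↑d * I).im) ((↑a + ↑c * I).im ⊔ (↑b + ↑d * I).im)) ⊆
            {z : ℂ | 0 < z.im} := by
          intro w hw
          rw [Complex.mem_reProdIm] at hw
          have h2 := hw.2.1
          simp only [Complex.add_im, Complex.ofReal_im, Complex.mul_I_im, Complex.ofReal_re,
            zero_add] at h2 ⊢
          exact lt_of_le_of_lt (le_min hc hd) h2
        exact (hpholo.mono hsub).congr fun w hw => hGp w (le_of_lt (hsub hw)))
    simpa [smul_eq_mul] using this
  have hrectL : ∀ a b c d : ℝ, c ≤ 0 → d ≤ 0 →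
      (∫ x in a..b, G (x + c * I)) - (∫ x in a..b, G (x + d * I)) +
        I * (∫ y in c..d, G (b + y * I)) - I * (∫ y in c..d, G (a + y * I)) = 0 := by
    intro a b c d hc hd
    have := Complex.integral_boundary_rect_eq_zero_of_continuousOn_of_differentiableOn G
      (a + c * I) (b + d * I) (hGcont.continuousOn)
      (by
        have hsub : (Ioo ((↑a + ↑c * I).re ⊓ (↑b + ↑d * I).re) ((↑a + ↑c * I).re ⊔ (↑b + ↑d * I).re) ×ℂ
            Ioo ((↑a + ↑c * I).im ⊓ (↑b + ↑d * I).im) ((↑a + ↑c * I).im ⊔ (↑b + ↑d * I).im)) ⊆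
            {z : ℂ | z.im < 0} := by
          intro w hw
          rw [Complex.mem_reProdIm] at hw
          have h2 := hw.2.2
          simp only [Complex.add_im, Complex.ofReal_im, Complex.mul_I_im, Complex.ofReal_re,
            zero_add] at h2 ⊢
          exact lt_of_lt_of_le h2 (max_le hc hd)
        exact (hmholo.mono hsub).congr fun w hw => hGm w (le_of_lt (hsub hw)))
    simpa [smul_eq_mul] using this
  -- rectangle integral vanishes for all rectangles
  have hrect : ∀ a b c d : ℝ,
      (∫ x in a..b, G (x + c * I)) - (∫ x in a..b, G (x + d * I)) +
        I * (∫ y in c..d, G (b + y * I)) - I * (∫ y in c..d, G (a + y * I)) = 0 := by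
    intro a b c d
    have h1 : (∫ x in a..b, G (x + c * I)) - (∫ x in a..b, G (x + (0:ℝ) * I)) +
        I * (∫ y in c..(0:ℝ), G (b + y * I)) - I * (∫ y in c..(0:ℝ), G (a + y * I)) = 0 := by
      rcases le_total c 0 with h | h
      · exact hrectL a b c 0 h le_rfl
      · exact hrectU a b c 0 h le_rfl
    have h2 : (∫ x in a..b, G (x + (0:ℝ) * I)) - (∫ x in a..b, G (x + d * I)) +
        I * (∫ y in (0:ℝ)..d, G (b + y * I)) - I * (∫ y in (0:ℝ)..d, G (a + y * I)) = 0 := by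
      rcases le_total d 0 with h | h
      · exact hrectL a b 0 d le_rfl h
      · exact hrectU a b 0 d le_rfl h
    have e1 := integral_add_adjacent_intervals (hintV b c 0) (hintV b 0 d)
    have e2 := integral_add_adjacent_intervals (hintV a c 0) (hintV a 0 d)
    linear_combination h1 + h2 - I * e1 + I * e2
  -- primitive
  set H : ℂ → ℂ := fun z =>
    (∫ x in (0:ℝ)..z.re, G (x + (0:ℝ) * I)) + I * ∫ y in (0:ℝ)..z.im, G (z.re + y * I)
    with hHdef
  have hkey : ∀ z₀ z : ℂ, H z - H z₀ - (z - z₀) * G z₀ =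
      (∫ x in z₀.re..z.re, (G (x + z₀.im * I) - G z₀)) +
        I * ∫ y in z₀.im..z.im, (G (z.re + y * I) - G z₀) := by
    intro z₀ z
    set a := z₀.re with ha
    set b := z.re with hb
    set c := z₀.im with hc
    set d := z.im with hd
    have s1 : (∫ x in a..b, (G (x + c * I) - G z₀)) =
        (∫ x in a..b, G (x + c * I)) - ((b : ℂ) - a) * G z₀ := by
      rw [intervalIntegral.integral_sub (hintH c a b) intervalIntegrable_const,
        intervalIntegral.integral_const]
      push_cast
      rw [Complex.real_smul]
      push_cast
      ring
    have s2 : (∫ y in c..d, (G (b + y * I) - G z₀)) =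
        (∫ y in c..d, G (b + y * I)) - ((d : ℂ) - c) * G z₀ := by
      rw [intervalIntegral.integral_sub (hintV b c d) intervalIntegrable_const,
        intervalIntegral.integral_const]
      push_cast
      rw [Complex.real_smul]
      push_cast
      ring
    have r1 := hrect a b c 0
    have e0 := integral_add_adjacent_intervals (hintH 0 0 a) (hintH 0 a b)
    have evb := integral_add_adjacent_intervals (hintV b c 0) (hintV b 0 d)
    have eva : (∫ y in c..(0:ℝ), G (a + y * I)) = -∫ y in (0:ℝ)..c, G (a + y * I) :=
      intervalIntegral.integral_symm 0 c
    have hz : z - z₀ = ((b : ℂ) - a) + ((d : ℂ) - c) * I := by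
      apply Complex.ext <;> simp [ha, hb, hc, hd]
    rw [s1, s2]
    simp only [hHdef, ← ha, ← hb, ← hc, ← hd]
    linear_combination -e0 - r1 - I * eva + I * evb - G z₀ * hz
  have hHd : ∀ z₀ : ℂ, HasDerivAt H (G z₀) z₀ := by
    intro z₀
    rw [hasDerivAt_iff_isLittleO, Asymptotics.isLittleO_iff]
    intro ε hε
    have hcont := hGcont.continuousAt (x := z₀)
    rw [Metric.continuousAt_iff] at hcont
    obtain ⟨δ, hδ, hball⟩ := hcont (ε / 2) (by positivity)
    have hmem : Metric.ball z₀ (δ / 2) ∈ nhds z₀ := Metric.ball_mem_nhds z₀ (by positivity)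
    filter_upwards [hmem] with z hz
    rw [Metric.mem_ball, dist_eq_norm] at hz
    simp only [smul_eq_mul]
    rw [hkey z₀ z]
    have hre : |z.re - z₀.re| ≤ ‖z - z₀‖ := by
      simpa using Complex.abs_re_le_norm (z - z₀)
    have him : |z.im - z₀.im| ≤ ‖z - z₀‖ := by
      simpa using Complex.abs_im_le_norm (z - z₀)
    have hb1 : ‖∫ x in z₀.re..z.re, (G (x + z₀.im * I) - G z₀)‖ ≤
        (ε / 2) * |z.re - z₀.re| := by
      apply intervalIntegral.norm_integral_le_of_norm_le_const
      intro x hx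
      have hx' : |x - z₀.re| ≤ |z.re - z₀.re| :=
        Set.abs_sub_left_of_mem_uIcc (Set.uIoc_subset_uIcc hx)
      have hdist : dist ((x : ℂ) + z₀.im * I) z₀ < δ := by
        rw [dist_eq_norm]
        have : (x : ℂ) + z₀.im * I - z₀ = ((x - z₀.re : ℝ) : ℂ) := by
          apply Complex.ext <;> simp
        rw [this, Complex.norm_real, Real.norm_eq_abs]
        calc |x - z₀.re| ≤ |z.re - z₀.re| := hx'
          _ ≤ ‖z - z₀‖ := hre
          _ < δ / 2 := hz
          _ < δ := by linarith
      have := hball hdist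
      rw [dist_eq_norm] at this
      exact le_of_lt this
    have hb2 : ‖∫ y in z₀.im..z.im, (G (z.re + y * I) - G z₀)‖ ≤
        (ε / 2) * |z.im - z₀.im| := by
      apply intervalIntegral.norm_integral_le_of_norm_le_const
      intro y hy
      have hy' : |y - z₀.im| ≤ |z.im - z₀.im| :=
        Set.abs_sub_left_of_mem_uIcc (Set.uIoc_subset_uIcc hy)
      have hdist : dist ((z.re : ℂ) + y * I) z₀ < δ := by
        rw [dist_eq_norm]
        have heq : (z.re : ℂ) + y * I - z₀ =
            ((z.re - z₀.re : ℝ) : ℂ) + ((y - z₀.im : ℝ) : ℂ) * I := by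
          apply Complex.ext <;> simp
        rw [heq]
        calc ‖((z.re - z₀.re : ℝ) : ℂ) + ((y - z₀.im : ℝ) : ℂ) * I‖ ≤
            ‖((z.re - z₀.re : ℝ) : ℂ)‖ + ‖((y - z₀.im : ℝ) : ℂ) * I‖ := norm_add_le _ _
          _ = |z.re - z₀.re| + |y - z₀.im| := by
              simp [← Complex.ofReal_sub, Complex.norm_real, Real.norm_eq_abs, norm_mul]
          _ ≤ ‖z - z₀‖ + |z.im - z₀.im| := by
              have := hre; have := hy'; have := him; linarith
          _ ≤ ‖z - z₀‖ + ‖z - z₀‖ := by linarith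
          _ < δ := by linarith
      have := hball hdist
      rw [dist_eq_norm] at this
      exact le_of_lt this
    calc ‖(∫ x in z₀.re..z.re, (G (x + z₀.im * I) - G z₀)) +
          I * ∫ y in z₀.im..z.im, (G (z.re + y * I) - G z₀)‖ ≤
        ‖∫ x in z₀.re..z.re, (G (x + z₀.im * I) - G z₀)‖ +
          ‖I * ∫ y in z₀.im..z.im, (G (z.re + y * I) - G z₀)‖ := norm_add_le _ _
      _ = ‖∫ x in z₀.re..z.re, (G (x + z₀.im * I) - G z₀)‖ +
          ‖∫ y in z₀.im..z.im, (G (z.re + y * I) - G z₀)‖ := by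
          rw [norm_mul, Complex.norm_I, one_mul]
      _ ≤ (ε / 2) * |z.re - z₀.re| + (ε / 2) * |z.im - z₀.im| := add_le_add hb1 hb2
      _ ≤ (ε / 2) * ‖z - z₀‖ + (ε / 2) * ‖z - z₀‖ := by
          have h2 : (0:ℝ) ≤ ε / 2 := by positivity
          exact add_le_add (mul_le_mul_of_nonneg_left hre h2)
            (mul_le_mul_of_nonneg_left him h2)
      _ = ε * ‖z - z₀‖ := by ring
  have hH : Differentiable ℂ H := fun z => (hHd z).differentiableAt
  have hderiv : deriv H = G := funext fun z => (hHd z).deriv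
  have hHa : AnalyticOnNhd ℂ H univ := Complex.analyticOnNhd_univ_iff_differentiable.2 hH
  have := hHa.deriv
  rw [hderiv] at this
  intro z
  exact (this z (mem_univ z)).differentiableAt

/-- Edge-of-the-wedge/Liouville step: if `F₊` is bounded, continuous on the closed upper
half-plane and holomorphic on the open upper half-plane, `F₋` is bounded, continuous on the
closed lower half-plane and holomorphic on the open lower half-plane, and they agree on the
real axis, then both are equal to a single constant; in particular `F₊(t) = F₊(0)` for real `t`. -/
theorem upper_lower_halfplane_agree_constant (Fp Fm : ℂ → ℂ)
    (hpbdd : ∃ C : ℝ, ∀ z : ℂ, 0 ≤ z.im → ‖Fp z‖ ≤ C)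
    (hpcont : ContinuousOn Fp {z : ℂ | 0 ≤ z.im})
    (hpholo : DifferentiableOn ℂ Fp {z : ℂ | 0 < z.im})
    (hmbdd : ∃ C : ℝ, ∀ z : ℂ, z.im ≤ 0 → ‖Fm z‖ ≤ C)
    (hmcont : ContinuousOn Fm {z : ℂ | z.im ≤ 0})
    (hmholo : DifferentiableOn ℂ Fm {z : ℂ | z.im < 0})
    (hagree : ∀ t : ℝ, Fp (t : ℂ) = Fm (t : ℂ)) :
    ∃ c : ℂ, (∀ z : ℂ, 0 ≤ z.im → Fp z = c) ∧ (∀ z : ℂ, z.im ≤ 0 → Fm z = c) ∧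
      ∀ t : ℝ, Fp (t : ℂ) = Fp (0 : ℂ) := by
  set G : ℂ → ℂ := fun z => if 0 ≤ z.im then Fp z else Fm z with hGdef
  have hGdiff : Differentiable ℂ G :=
    glue_differentiable Fp Fm hpcont hpholo hmcont hmholo hagree
  have hGp : ∀ z : ℂ, 0 ≤ z.im → G z = Fp z := fun z hz => if_pos hz
  have hGm : ∀ z : ℂ, z.im ≤ 0 → G z = Fm z := by
    intro z hz
    by_cases h : 0 ≤ z.im
    · have hz0 : z.im = 0 := le_antisymm hz h
      have hzr : z = (z.re : ℂ) := by apply Complex.ext <;> simp [hz0]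
      simp only [hGdef, if_pos h]
      rw [hzr, hagree]
    · exact if_neg h
  obtain ⟨C₁, hC₁⟩ := hpbdd
  obtain ⟨C₂, hC₂⟩ := hmbdd
  have hbd : Bornology.IsBounded (Set.range G) := by
    rw [Metric.isBounded_iff_subset_closedBall 0]
    refine ⟨max C₁ C₂, ?_⟩
    rintro _ ⟨z, rfl⟩
    rw [Metric.mem_closedBall, dist_zero_right]
    rcases le_total 0 z.im with h | h
    · rw [hGp z h]; exact le_trans (hC₁ z h) (le_max_left _ _)
    · rw [hGm z h]; exact le_trans (hC₂ z h) (le_max_right _ _)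
  obtain ⟨c, hc⟩ := hGdiff.exists_const_forall_eq_of_bounded hbd
  refine ⟨c, fun z hz => by rw [← hGp z hz]; exact hc z,
    fun z hz => by rw [← hGm z hz]; exact hc z, fun t => ?_⟩
  have h1 : Fp (t : ℂ) = c := by
    rw [← hGp (t : ℂ) (by simp)]; exact hc _
  have h2 : Fp (0 : ℂ) = c := by
    rw [← hGp (0 : ℂ) (by simp)]; exact hc _
  rw [h1, h2]
end

section
/- Let F : ℂ → ℂ be bounded and continuous on the closed upper half-plane {z : Im z ≥ 0}, holomorphic on the open upper half-plane {z : Im z > 0}, and real-valued on the real axis (F(t) ∈ ℝ for all t ∈ ℝ). Then F is constant on the closed upper half-plane. -/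
open Complex Set Filter

lemma halfplane_exp_re_nonpos (F : ℂ → ℂ)
    (hbdd : ∃ C : ℝ, ∀ z : ℂ, 0 ≤ z.im → ‖F z‖ ≤ C)
    (hcont : ContinuousOn F {z : ℂ | 0 ≤ z.im})
    (hholo : DifferentiableOn ℂ F {z : ℂ | 0 < z.im})
    (hreal : ∀ t : ℝ, (F (t : ℂ)).im = 0)
    (ε : ℂ) (hε : ε.re = 0) :
    ∀ z : ℂ, 0 ≤ z.im → (ε * F z).re ≤ 0 := by
  obtain ⟨C, hC⟩ := hbdd
  set g : ℂ → ℂ := fun w => Complex.exp (ε * F (I * w)) with hg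
  have hnorm : ∀ w : ℂ, ‖g w‖ = Real.exp ((ε * F (I * w)).re) := by
    intro w; simp [hg, Complex.norm_exp]
  have hre_eq : ∀ u : ℂ, (ε * u).re = -ε.im * u.im := by
    intro u; rw [Complex.mul_re, hε]; ring
  have hboundval : ∀ w : ℂ, 0 ≤ w.re → ‖g w‖ ≤ Real.exp (|ε.im| * C) := by
    intro w hw
    rw [hnorm]
    apply Real.exp_le_exp.2
    rw [hre_eq]
    calc -ε.im * (F (I * w)).im ≤ |(-ε.im) * (F (I * w)).im| := le_abs_self _
      _ = |ε.im| * |(F (I * w)).im| := by rw [abs_mul, abs_neg]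
      _ ≤ |ε.im| * C :=
          mul_le_mul_of_nonneg_left
            ((Complex.abs_im_le_norm _).trans (hC _ (by simpa using hw))) (abs_nonneg _)
  have hd : DiffContOnCl ℂ g {w : ℂ | 0 < w.re} := by
    constructor
    · exact (((hholo.comp ((differentiable_id.const_mul I).differentiableOn)
        (fun w hw => by simpa using hw)).const_mul ε).cexp)
    · rw [closure_setOf_lt_re]
      have hc2 : ContinuousOn (fun w : ℂ => ε * F (I * w)) {w : ℂ | 0 ≤ w.re} := by
        refine continuousOn_const.mul ?_
        refine hcont.comp (continuous_const.mul continuous_id).continuousOn ?_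
        intro w hw
        show 0 ≤ (I * w).im
        simpa using hw
      exact hc2.cexp
  have key : ∀ z : ℂ, 0 ≤ z.re → ‖g z‖ ≤ 1 := by
    intro z hz
    refine PhragmenLindelof.right_half_plane_of_bounded_on_real hd ?_ ?_ ?_ hz
    · refine ⟨1, one_lt_two, 0, Asymptotics.IsBigO.of_bound (Real.exp (|ε.im| * C)) ?_⟩
      rw [eventually_inf_principal]
      refine Eventually.of_forall fun w hw => ?_
      simp only [zero_mul, Real.exp_zero, norm_one, mul_one]
      exact hboundval w (le_of_lt hw)
    · refine isBoundedUnder_of_eventually_le (a := Real.exp (|ε.im| * C)) ?_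
      filter_upwards [eventually_ge_atTop (0:ℝ)] with x hx
      exact hboundval x (by simpa using hx)
    · intro x
      have harg : I * ((x:ℂ) * I) = ((-x : ℝ) : ℂ) := by
        rw [show I * ((x:ℂ) * I) = (I * I) * x by ring, I_mul_I]; push_cast; ring
      rw [hnorm, harg, hre_eq, hreal (-x)]
      simp
  intro z hz
  have h1 : ‖g (-I * z)‖ ≤ 1 := key _ (by simp [Complex.mul_re]; linarith)
  have h2 : I * (-I * z) = z := by
    rw [show I * (-I * z) = -(I * I) * z by ring, I_mul_I]; ring
  rw [hnorm, h2, Real.exp_le_one_iff] at h1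
  exact h1

/-- Schwarz reflection/Liouville step: a function bounded and continuous on the closed upper
half-plane, holomorphic on the open upper half-plane, and real-valued on the real axis, is
constant on the closed upper half-plane. -/
theorem upper_halfplane_real_boundary_constant (F : ℂ → ℂ)
    (hbdd : ∃ C : ℝ, ∀ z : ℂ, 0 ≤ z.im → ‖F z‖ ≤ C)
    (hcont : ContinuousOn F {z : ℂ | 0 ≤ z.im})
    (hholo : DifferentiableOn ℂ F {z : ℂ | 0 < z.im})
    (hreal : ∀ t : ℝ, (F (t : ℂ)).im = 0) :
    ∃ c : ℂ, ∀ z : ℂ, 0 ≤ z.im → F z = c := by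
  -- Step 1: Im F = 0 on the closed upper half-plane
  have him0 : ∀ z : ℂ, 0 ≤ z.im → (F z).im = 0 := by
    intro z hz
    have h1 := halfplane_exp_re_nonpos F hbdd hcont hholo hreal I (by simp) z hz
    have h2 := halfplane_exp_re_nonpos F hbdd hcont hholo hreal (-I) (by simp) z hz
    rw [Complex.mul_re] at h1 h2
    simp at h1 h2
    linarith
  -- Step 2: F is constant on the open upper half-plane, via open mapping theorem
  set U : Set ℂ := {z : ℂ | 0 < z.im} with hU
  have hUopen : IsOpen U := isOpen_lt continuous_const Complex.continuous_im
  have hA : AnalyticOnNhd ℂ F U := hholo.analyticOnNhd hUopen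
  have hpre : IsPreconnected U := (convex_halfSpace_im_gt 0).isPreconnected
  obtain ⟨c, hc⟩ : ∃ c : ℂ, ∀ z ∈ U, F z = c := by
    rcases hA.is_constant_or_isOpen hpre with ⟨w, hw⟩ | hopen
    · exact ⟨w, hw⟩
    · exfalso
      have hIU : I ∈ U := by simp [hU]
      have : IsOpen (F '' U) := hopen U subset_rfl hUopen
      obtain ⟨ε, hε0, hball⟩ := Metric.isOpen_iff.1 this (F I) ⟨I, hIU, rfl⟩
      have hmem : F I + (ε/2) * I ∈ Metric.ball (F I) ε := by
        simp [Complex.dist_eq, abs_of_pos hε0]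
        linarith
      obtain ⟨z, hzU, hzF⟩ := hball hmem
      have h1 : (F z).im = 0 := him0 z (le_of_lt hzU)
      have h2 : (F I).im = 0 := him0 I (by simp)
      rw [hzF] at h1
      simp [Complex.add_im, h2] at h1
      linarith
  -- Step 3: extend to the boundary by continuity
  refine ⟨c, fun z hz => ?_⟩
  rcases lt_or_eq_of_le hz with h | h
  · exact hc z h
  -- boundary point: approximate from inside
  have hzc : ContinuousWithinAt F {z : ℂ | 0 ≤ z.im} z := hcont z hz
  have hpath : Tendsto (fun t : ℝ => z + t * I) (nhdsWithin 0 (Set.Ioi 0)) (nhdsWithin z {z : ℂ | 0 ≤ z.im}) := by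
    apply tendsto_nhdsWithin_of_tendsto_nhds_of_eventually_within
    · have : Tendsto (fun t : ℝ => z + t * I) (nhds 0) (nhds z) := by
        have : Continuous (fun t : ℝ => z + (t : ℂ) * I) := by continuity
        simpa using this.tendsto 0
      exact this.mono_left nhdsWithin_le_nhds
    · filter_upwards [self_mem_nhdsWithin] with t ht
      simp only [mem_setOf_eq, Complex.add_im]
      have : (↑t * I).im = t := by simp
      rw [this, ← h]
      simp
      linarith [mem_Ioi.1 ht]
  have hF1 : Tendsto (fun t : ℝ => F (z + t * I)) (nhdsWithin 0 (Set.Ioi 0)) (nhds (F z)) :=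
    hzc.tendsto.comp hpath
  have hF2 : Tendsto (fun t : ℝ => F (z + t * I)) (nhdsWithin 0 (Set.Ioi 0)) (nhds c) := by
    apply Tendsto.congr' _ tendsto_const_nhds
    filter_upwards [self_mem_nhdsWithin] with t ht
    refine (hc _ ?_).symm
    simp only [hU, mem_setOf_eq, Complex.add_im]
    have : (↑t * I).im = t := by simp
    rw [this, ← h]
    simp
    linarith [mem_Ioi.1 ht]
  exact tendsto_nhds_unique hF1 hF2
end

section
/- Let β > 0 and let F : ℂ → ℂ be bounded and continuous on the closed strip S̄_β = {z ∈ ℂ : 0 ≤ Im z ≤ β}, holomorphic on the open strip S_β = {z : 0 < Im z < β}, and real-valued on both boundary lines: F(t) ∈ ℝ and F(t + iβ) ∈ ℝ for all t ∈ ℝ. Then F is constant on S̄_β. -/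
open Set Complex

/-- Phragmén–Lindelöf bound for `exp (ε • I • F)` on the strip. -/
lemma strip_exp_mul_le (β : ℝ) (hβ : 0 < β) (F : ℂ → ℂ) (ε : ℝ)
    (hbdd : ∃ C : ℝ, ∀ z : ℂ, 0 ≤ z.im → z.im ≤ β → ‖F z‖ ≤ C)
    (hcont : ContinuousOn F {z : ℂ | 0 ≤ z.im ∧ z.im ≤ β})
    (hholo : DifferentiableOn ℂ F {z : ℂ | 0 < z.im ∧ z.im < β})
    (hreal0 : ∀ t : ℝ, (F (t : ℂ)).im = 0)
    (hrealβ : ∀ t : ℝ, (F ((t : ℂ) + (β : ℂ) * Complex.I)).im = 0)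
    {z : ℂ} (h0 : 0 ≤ z.im) (hb : z.im ≤ β) :
    ‖Complex.exp ((ε : ℂ) * Complex.I * F z)‖ ≤ 1 := by
  obtain ⟨C, hC⟩ := hbdd
  have hSeq : (Complex.im ⁻¹' Set.Ioo 0 β) = {z : ℂ | 0 < z.im ∧ z.im < β} := rfl
  have hclos : closure (Complex.im ⁻¹' Set.Ioo 0 β) = {z : ℂ | 0 ≤ z.im ∧ z.im ≤ β} := by
    rw [Complex.closure_preimage_im, closure_Ioo hβ.ne]
    rfl
  have hnorm : ∀ w : ℂ, ‖Complex.exp ((ε : ℂ) * Complex.I * w)‖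
      = Real.exp (-(ε * w.im)) := by
    intro w
    rw [Complex.norm_exp]
    congr 1
    simp [Complex.mul_re, Complex.mul_im]
  refine PhragmenLindelof.horizontal_strip (f := fun w => Complex.exp ((ε : ℂ) * Complex.I * F w))
    ?_ ?_ ?_ ?_ h0 hb
  · constructor
    · exact ((hholo.mono hSeq.subset).const_mul ((ε : ℂ) * Complex.I)).cexp
    · rw [hclos]
      exact (continuousOn_const.mul hcont).cexp
  · refine ⟨0, by rw [sub_zero]; exact div_pos Real.pi_pos hβ, |ε| * C, ?_⟩
    refine Asymptotics.IsBigO.of_bound 1 ?_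
    rw [Filter.eventually_inf_principal]
    refine Filter.Eventually.of_forall fun w hw => ?_
    rw [hSeq] at hw
    have h1 : -(ε * (F w).im) ≤ |ε| * C := by
      have h2 : |(F w).im| ≤ ‖F w‖ := Complex.abs_im_le_norm _
      have h3 : ‖F w‖ ≤ C := hC w hw.1.le hw.2.le
      calc -(ε * (F w).im) ≤ |ε * (F w).im| := neg_le_abs _
        _ = |ε| * |(F w).im| := abs_mul _ _
        _ ≤ |ε| * C := mul_le_mul_of_nonneg_left (h2.trans h3) (abs_nonneg _)
    have hg : Real.exp (|ε| * C * Real.exp (0 * |w.re|)) = Real.exp (|ε| * C) := by norm_num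
    rw [hnorm, one_mul, Real.norm_eq_abs, Real.abs_exp, hg]
    exact Real.exp_le_exp.2 h1
  · intro w hw
    have hwz : w = (w.re : ℂ) := Complex.ext rfl (by simp [hw])
    rw [hnorm, hwz, hreal0]
    simp
  · intro w hw
    have hwz : w = (w.re : ℂ) + (β : ℂ) * Complex.I := Complex.ext (by simp) (by simp [hw])
    rw [hnorm, hwz, hrealβ]
    simp

/-- Repeated Schwarz reflection/Liouville step: a function bounded and continuous on the closed
strip `0 ≤ Im z ≤ β`, holomorphic on the open strip, and real-valued on both boundary lines,
is constant on the closed strip. -/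
theorem strip_real_boundaries_constant (β : ℝ) (hβ : 0 < β) (F : ℂ → ℂ)
    (hbdd : ∃ C : ℝ, ∀ z : ℂ, 0 ≤ z.im → z.im ≤ β → ‖F z‖ ≤ C)
    (hcont : ContinuousOn F {z : ℂ | 0 ≤ z.im ∧ z.im ≤ β})
    (hholo : DifferentiableOn ℂ F {z : ℂ | 0 < z.im ∧ z.im < β})
    (hreal0 : ∀ t : ℝ, (F (t : ℂ)).im = 0)
    (hrealβ : ∀ t : ℝ, (F ((t : ℂ) + (β : ℂ) * Complex.I)).im = 0) :
    ∃ c : ℂ, ∀ z : ℂ, 0 ≤ z.im → z.im ≤ β → F z = c := by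
  -- Step 1: `Im (F z) = 0` on the closed strip, by Phragmén–Lindelöf applied to `exp (± I F)`.
  have him : ∀ z : ℂ, 0 ≤ z.im → z.im ≤ β → (F z).im = 0 := by
    intro z h0 hb
    have h1 := strip_exp_mul_le β hβ F 1 hbdd hcont hholo hreal0 hrealβ h0 hb
    have h2 := strip_exp_mul_le β hβ F (-1) hbdd hcont hholo hreal0 hrealβ h0 hb
    have hnorm : ∀ ε : ℝ, ‖Complex.exp ((ε : ℂ) * Complex.I * F z)‖
        = Real.exp (-(ε * (F z).im)) := by
      intro ε
      rw [Complex.norm_exp]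
      congr 1
      simp [Complex.mul_re, Complex.mul_im]
    rw [hnorm 1, Real.exp_le_one_iff] at h1
    rw [hnorm (-1), Real.exp_le_one_iff] at h2
    linarith
  -- Step 2: `F` is constant on the open strip by the open mapping theorem.
  set S : Set ℂ := {z : ℂ | 0 < z.im ∧ z.im < β} with hS
  have hSopen : IsOpen S := isOpen_Ioo.preimage Complex.continuous_im
  have hSconv : Convex ℝ S := (convex_Ioo 0 β).linear_preimage Complex.imLm
  have hAn : AnalyticOnNhd ℂ F S := hholo.analyticOnNhd hSopen
  have hne : ((β / 2 : ℝ) : ℂ) * Complex.I ∈ S := by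
    constructor <;> simp [Complex.mul_I_im] <;> linarith
  rcases hAn.is_constant_or_isOpen hSconv.isPreconnected with ⟨c, hc⟩ | hopen
  · -- extend the constant to the closed strip by continuity
    refine ⟨c, ?_⟩
    have hcl : closure S = {z : ℂ | 0 ≤ z.im ∧ z.im ≤ β} := by
      have h1 : S = Complex.im ⁻¹' Set.Ioo 0 β := rfl
      rw [h1, Complex.closure_preimage_im, closure_Ioo hβ.ne]
      rfl
    have heq : Set.EqOn F (fun _ => c) {z : ℂ | 0 ≤ z.im ∧ z.im ≤ β} :=
      Set.EqOn.of_subset_closure (s := S) (fun w hw => hc w hw) hcont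
        continuousOn_const (fun w hw => ⟨hw.1.le, hw.2.le⟩) hcl.ge
    exact fun z hz0 hzb => heq ⟨hz0, hzb⟩
  · -- the image of the open strip would be open, but it lies in the real line: contradiction
    exfalso
    have himg : IsOpen (F '' S) := hopen S le_rfl hSopen
    have hmem : F (((β / 2 : ℝ) : ℂ) * Complex.I) ∈ F '' S := ⟨_, hne, rfl⟩
    obtain ⟨ε, hε, hball⟩ := Metric.isOpen_iff.1 himg _ hmem
    set w := F (((β / 2 : ℝ) : ℂ) * Complex.I) with hwdef
    have hw2 : w + ((ε / 2 : ℝ) : ℂ) * Complex.I ∈ F '' S := by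
      apply hball
      have hd : dist (w + ((ε / 2 : ℝ) : ℂ) * Complex.I) w = ε / 2 := by
        rw [dist_eq_norm, add_sub_cancel_left, norm_mul, Complex.norm_real,
          Complex.norm_I, mul_one, Real.norm_eq_abs,
          _root_.abs_of_nonneg (by positivity : (0:ℝ) ≤ ε / 2)]
      rw [Metric.mem_ball, hd]
      linarith
    obtain ⟨u, hu, huw⟩ := hw2
    have h1 : (F u).im = 0 := him u hu.1.le hu.2.le
    have h2 : w.im = 0 := him _ (by simp [Complex.mul_I_im]; linarith)
      (by simp [Complex.mul_I_im]; linarith)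
    rw [huw, Complex.add_im, h2, zero_add] at h1
    simp [Complex.mul_I_im] at h1
    linarith
end
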